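/- arXiv:1901.09363 — 3 statements merged into one kernel-verified Lean document; each statement's English description precedes it below -/
import Mathlib

section
/- Let R = (V, ≤, (ρ_i)_{i∈I}) be an ordered binary structure. Every equivalence class A of the relation ≃_R is either an interval of the linear order (V, ≤), or a two-element set {x, y} with x < y such that the open interval ]x,y[ = {z : x < z < y} is itself an equivalence class of ≃_R. -/
/-- An ordered binary structure: a domain `V`, a linear order `le` on `V`,
and a family of binary relations `rel i` on `V` indexed by `ι`. -/
structure OrdBin (ι : Type) where
  V : Type
  le : V → V → Prop
  linear : IsLinearOrder V le
  rel : ι → V → V → Prop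

namespace OrdBin

variable {ι : Type}

/-- The substructure induced on a subset `A` of the domain. -/
def restrict (R : OrdBin ι) (A : Set R.V) : OrdBin ι where
  V := A
  le := fun a b => R.le a.1 b.1
  linear := by
    haveI := R.linear
    exact
      { refl := fun a => refl_of R.le a.1
        trans := fun a b c hab hbc => trans_of R.le hab hbc
        antisymm := fun a b hab hba => Subtype.ext (antisymm_of R.le hab hba)
        total := fun a b => total_of R.le a.1 b.1 }
  rel := fun i a b => R.rel i a.1 b.1

/-- Isomorphism of ordered binary structures: a bijection of the domains preserving
the linear order and each binary relation. -/
def Iso (R S : OrdBin ι) : Prop :=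
  ∃ e : R.V ≃ S.V, (∀ x y : R.V, R.le x y ↔ S.le (e x) (e y)) ∧
    ∀ (i : ι) (x y : R.V), R.rel i x y ↔ S.rel i (e x) (e y)

/-- `R` embeds in `S` if `R` is isomorphic to an induced substructure of `S`. -/
def Embeds (R S : OrdBin ι) : Prop :=
  ∃ A : Set S.V, Iso R (S.restrict A)

/-- `B` is a monomorphic part of `R`: any two finite subsets of the domain of the
same cardinality which agree outside `B` induce isomorphic substructures. -/
def MonoPart (R : OrdBin ι) (B : Set R.V) : Prop :=
  ∀ A A' : Set R.V, A.Finite → A'.Finite → A.ncard = A'.ncard →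
    A \ B = A' \ B → Iso (R.restrict A) (R.restrict A')

/-- A monomorphic decomposition of `R`: a partition of the domain into monomorphic parts. -/
def MonoDecomp (R : OrdBin ι) (P : Set (Set R.V)) : Prop :=
  Setoid.IsPartition P ∧ ∀ B ∈ P, R.MonoPart B

/-- `R` has a monomorphic decomposition with finitely many blocks. -/
def HasFiniteMonoDecomp (R : OrdBin ι) : Prop :=
  ∃ P : Set (Set R.V), R.MonoDecomp P ∧ P.Finite

/-- A hereditary class of finite ordered binary structures. -/
def Hereditary (C : Set (OrdBin ι)) : Prop :=
  (∀ R ∈ C, Finite R.V) ∧ ∀ R ∈ C, ∀ S : OrdBin ι, Embeds S R → S ∈ C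

/-- `x` and `y` are `F`-equivalent: the substructures induced on `{x} ∪ F` and
`{y} ∪ F` are isomorphic. -/
def EqF (R : OrdBin ι) (F : Set R.V) (x y : R.V) : Prop :=
  Iso (R.restrict (insert x F)) (R.restrict (insert y F))

/-- `x ≃_{m,R} y`: `x` and `y` are `F`-equivalent for every `m`-element subset `F`
of `V \ {x, y}`. -/
def EqM (R : OrdBin ι) (m : ℕ) (x y : R.V) : Prop :=
  ∀ F : Set R.V, F.Finite → F.ncard = m → x ∉ F → y ∉ F → EqF R F x y

/-- `x ≃_{≤m,R} y`: `x ≃_{m',R} y` for every `m' ≤ m`. -/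
def EqLe (R : OrdBin ι) (m : ℕ) (x y : R.V) : Prop :=
  ∀ m' ≤ m, EqM R m' x y

/-- `x ≃_R y`: `x ≃_{m,R} y` for every `m`. -/
def EqR (R : OrdBin ι) (x y : R.V) : Prop :=
  ∀ m : ℕ, EqM R m x y

/-- `d(x,y) = d(x',y')`: the pair of truth values `(ρ_i(x,y), ρ_i(y,x))` agrees with
`(ρ_i(x',y'), ρ_i(y',x'))` for every `i`. -/
def dEq (R : OrdBin ι) (x y x' y' : R.V) : Prop :=
  ∀ i : ι, (R.rel i x y ↔ R.rel i x' y') ∧ (R.rel i y x ↔ R.rel i y' x')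

/-- `A` is an interval of the linear order `(V, le)`. -/
def IntervalLe (R : OrdBin ι) (A : Set R.V) : Prop :=
  ∀ u ∈ A, ∀ w ∈ A, ∀ z : R.V, R.le u z → R.le z w → z ∈ A

/-- `A` is an interval of `R`: an interval of the order such that all elements of `A`
have the same relations to each element outside `A`. -/
def IntervalR (R : OrdBin ι) (A : Set R.V) : Prop :=
  IntervalLe R A ∧ ∀ u ∈ A, ∀ u' ∈ A, ∀ w ∉ A, dEq R u w u' w

/-- `R` is `n`-monomorphic: the substructures induced on any two `n`-element subsets
of the domain are isomorphic. -/
def NMono (R : OrdBin ι) (n : ℕ) : Prop :=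
  ∀ A A' : Set R.V, A.Finite → A'.Finite → A.ncard = n → A'.ncard = n →
    Iso (R.restrict A) (R.restrict A')

/-- `R` is `(≤n)`-monomorphic. -/
def LeMono (R : OrdBin ι) (n : ℕ) : Prop :=
  ∀ m ≤ n, NMono R m

/-- `R` is monomorphic. -/
def Mono (R : OrdBin ι) : Prop :=
  ∀ n : ℕ, NMono R n

/-- The profile of `R`: the number of induced substructures on `n`-element subsets
of the domain, counted up to isomorphism. -/
noncomputable def profileR (R : OrdBin ι) (n : ℕ) : ℕ :=
  Nat.card (Quot fun (A B : {A : Set R.V // A.Finite ∧ A.ncard = n}) =>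
    Iso (R.restrict A.1) (R.restrict B.1))

/-- The profile of a class `C`: the number of members of `C` with exactly `n`
elements, counted up to isomorphism. -/
noncomputable def profileC (C : Set (OrdBin ι)) (n : ℕ) : ℕ :=
  Nat.card (Quot fun (R S : {R : OrdBin ι // R ∈ C ∧ Nat.card R.V = n}) =>
    Iso R.1 S.1)

end OrdBin

/-- The Fibonacci sequence with `F 0 = F 1 = 1`. -/
def fib1 : ℕ → ℕ
  | 0 => 1
  | 1 => 1
  | n + 2 => fib1 (n + 1) + fib1 n

section AuxDev

namespace OrdBin

variable {ι : Type}

/-- Strict betweenness. -/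
def Btw (R : OrdBin ι) (u z w : R.V) : Prop :=
  (R.le u z ∧ u ≠ z) ∧ (R.le z w ∧ z ≠ w)

theorem Iso_refl (S : OrdBin ι) : Iso S S :=
  ⟨Equiv.refl _, fun _ _ => Iff.rfl, fun _ _ _ => Iff.rfl⟩

theorem Iso_symm {S T : OrdBin ι} (h : Iso S T) : Iso T S := by
  obtain ⟨e, h1, h2⟩ := h
  refine ⟨e.symm, fun x y => ?_, fun i x y => ?_⟩
  · simpa using (h1 (e.symm x) (e.symm y)).symm
  · simpa using (h2 i (e.symm x) (e.symm y)).symm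

theorem Iso_trans {S T U : OrdBin ι} (h : Iso S T) (h' : Iso T U) : Iso S U := by
  obtain ⟨e, h1, h2⟩ := h
  obtain ⟨f, g1, g2⟩ := h'
  exact ⟨e.trans f, fun x y => (h1 x y).trans (g1 _ _), fun i x y => (h2 i x y).trans (g2 i _ _)⟩

theorem dEq_refl (R : OrdBin ι) (x y : R.V) : dEq R x y x y := fun _ => ⟨Iff.rfl, Iff.rfl⟩

theorem dEq_symm {R : OrdBin ι} {x y x' y' : R.V} (h : dEq R x y x' y') : dEq R x' y' x y :=
  fun i => ⟨(h i).1.symm, (h i).2.symm⟩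

theorem dEq_trans {R : OrdBin ι} {x y x' y' x'' y'' : R.V}
    (h : dEq R x y x' y') (h' : dEq R x' y' x'' y'') : dEq R x y x'' y'' :=
  fun i => ⟨(h i).1.trans (h' i).1, (h i).2.trans (h' i).2⟩

theorem dEq_flip {R : OrdBin ι} {x y x' y' : R.V} (h : dEq R x y x' y') : dEq R y x y' x' :=
  fun i => ⟨(h i).2, (h i).1⟩

theorem EqR_refl (R : OrdBin ι) (x : R.V) : EqR R x x :=
  fun _ _ _ _ _ _ => Iso_refl _

theorem EqR_symm {R : OrdBin ι} {x y : R.V} (h : EqR R x y) : EqR R y x :=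
  fun m F hF hc hy hx => Iso_symm (h m F hF hc hx hy)

/-- The key packaging: `EqR` gives `EqF` for every finite avoiding set. -/
theorem EqR_eqF {R : OrdBin ι} {x y : R.V} (h : EqR R x y) (F : Set R.V) (hF : F.Finite)
    (hx : x ∉ F) (hy : y ∉ F) : EqF R F x y :=
  h F.ncard F hF rfl hx hy

theorem EqR_trans {R : OrdBin ι} {x y z : R.V} (h1 : EqR R x y) (h2 : EqR R y z) :
    EqR R x z := by
  rcases eq_or_ne x y with rfl | hxy
  · exact h2
  rcases eq_or_ne y z with rfl | hyz
  · exact h1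
  rcases eq_or_ne x z with rfl | hxz
  · exact EqR_refl R x
  intro m F hF hcard hxF hzF
  by_cases hyF : y ∈ F
  · -- the tricky case
    have hG : (insert x (F \ {y})).Finite := (hF.subset Set.diff_subset).insert x
    have hH : (insert z (F \ {y})).Finite := (hF.subset Set.diff_subset).insert z
    have hyG : y ∉ insert x (F \ {y}) := by
      simp [hxy.symm]
    have hzG : z ∉ insert x (F \ {y}) := by
      intro hmem
      rcases hmem with h | h
      · exact hxz h.symm
      · exact hzF h.1
    have hxH : x ∉ insert z (F \ {y}) := by
      intro hmem
      rcases hmem with h | h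
      · exact hxz h
      · exact hxF h.1
    have hyH : y ∉ insert z (F \ {y}) := by
      simp [hyz]
    have e2 : EqF R (insert x (F \ {y})) y z := EqR_eqF h2 _ hG hyG hzG
    have e1 : EqF R (insert z (F \ {y})) x y := EqR_eqF h1 _ hH hxH hyH
    have key1 : insert y (insert x (F \ {y})) = insert x F := by
      rw [Set.insert_comm, Set.insert_diff_singleton, Set.insert_eq_self.2 hyF]
    have key2 : insert z (insert x (F \ {y})) = insert x (insert z (F \ {y})) :=
      Set.insert_comm _ _ _
    have key3 : insert y (insert z (F \ {y})) = insert z F := by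
      rw [Set.insert_comm, Set.insert_diff_singleton, Set.insert_eq_self.2 hyF]
    unfold EqF at e1 e2 ⊢
    rw [key1, key2] at e2
    rw [key3] at e1
    exact Iso_trans e2 e1
  · exact Iso_trans (h1 m F hF hcard hxF hyF) (h2 m F hF hcard hyF hzF)

/-- A linear order structure on the domain. -/
noncomputable def LO (R : OrdBin ι) : LinearOrder R.V :=
  haveI := R.linear
  { le := R.le
    le_refl := fun a => refl_of R.le a
    le_trans := fun a b c => trans_of R.le
    le_antisymm := fun a b => antisymm_of R.le
    le_total := fun a b => total_of R.le a b
    toDecidableLE := fun a b => Classical.propDecidable _ }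

/-- Rank preservation along a le-preserving bijection of subsets. -/
theorem rank_eq {R : OrdBin ι} {D D' : Set R.V} (e : ↥D ≃ ↥D')
    (he : ∀ a b : ↥D, R.le a.1 b.1 ↔ R.le (e a).1 (e b).1) (t : ↥D) :
    {s | s ∈ D ∧ R.le s t.1}.ncard = {s | s ∈ D' ∧ R.le s (e t).1}.ncard := by
  rw [← Nat.card_coe_set_eq, ← Nat.card_coe_set_eq]
  refine Nat.card_congr ?_
  refine ⟨fun s => ⟨(e ⟨s.1, s.2.1⟩).1, (e ⟨s.1, s.2.1⟩).2, (he ⟨s.1, s.2.1⟩ t).mp s.2.2⟩,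
    fun w => ⟨(e.symm ⟨w.1, w.2.1⟩).1, (e.symm ⟨w.1, w.2.1⟩).2, ?_⟩, fun s => ?_, fun w => ?_⟩
  · have := (he (e.symm ⟨w.1, w.2.1⟩) t).mpr
    simp only [Equiv.apply_symm_apply] at this
    exact this w.2.2
  · ext
    simp
  · ext
    simp

/-- In a finite set, the downward rank determines the element. -/
theorem rank_inj {R : OrdBin ι} {D' : Set R.V} (hD' : D'.Finite) {w₁ w₂ : R.V}
    (h₁ : w₁ ∈ D') (h₂ : w₂ ∈ D')
    (h : {s | s ∈ D' ∧ R.le s w₁}.ncard = {s | s ∈ D' ∧ R.le s w₂}.ncard) : w₁ = w₂ := by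
  haveI := R.linear
  by_contra hne
  have key : ∀ a b : R.V, a ∈ D' → b ∈ D' → R.le a b → a ≠ b →
      {s | s ∈ D' ∧ R.le s a}.ncard < {s | s ∈ D' ∧ R.le s b}.ncard := by
    intro a b ha hb hab hne'
    refine Set.ncard_lt_ncard ?_ (hD'.subset (fun s hs => hs.1))
    constructor
    · exact fun s hs => ⟨hs.1, trans_of R.le hs.2 hab⟩
    · intro hsub
      have : b ∈ {s | s ∈ D' ∧ R.le s a} := hsub ⟨hb, refl_of R.le b⟩
      exact hne' (antisymm_of R.le hab this.2)
  rcases total_of R.le w₁ w₂ with hle | hle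
  · exact absurd h (Nat.ne_of_lt (key _ _ h₁ h₂ hle hne))
  · exact absurd h.symm (Nat.ne_of_lt (key _ _ h₂ h₁ hle (Ne.symm hne)))

/-- Rigidity: if `f` matches the ranks of an isomorphism of restrictions, relations
transfer along `f`. -/
theorem rel_transfer {R : OrdBin ι} {D D' : Set R.V} (hD' : D'.Finite)
    (h : Iso (R.restrict D) (R.restrict D')) (f : R.V → R.V)
    (hf : ∀ v ∈ D, f v ∈ D')
    (hrank : ∀ v (hv : v ∈ D),
      {s | s ∈ D ∧ R.le s v}.ncard = {s | s ∈ D' ∧ R.le s (f v)}.ncard) :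
    ∀ a ∈ D, ∀ b ∈ D, ∀ i, R.rel i a b ↔ R.rel i (f a) (f b) := by
  obtain ⟨e, hle, hrel⟩ := h
  have hfix : ∀ (v : R.V) (hv : v ∈ D), (e ⟨v, hv⟩).1 = f v := by
    intro v hv
    have h1 := rank_eq (D := D) (D' := D') e hle ⟨v, hv⟩
    exact rank_inj hD' (e ⟨v, hv⟩).2 (hf v hv) (h1.symm.trans (hrank v hv))
  intro a ha b hb i
  have := hrel i ⟨a, ha⟩ ⟨b, hb⟩
  rwa [show ((R.restrict D).rel i ⟨a, ha⟩ ⟨b, hb⟩) = R.rel i a b from rfl,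
    show ((R.restrict D').rel i (e ⟨a, ha⟩) (e ⟨b, hb⟩)) =
      R.rel i (e ⟨a, ha⟩).1 (e ⟨b, hb⟩).1 from rfl, hfix a ha, hfix b hb] at this

section SmallRanks
variable {R : OrdBin ι}

theorem rank_pair_lo {a b : R.V} (h1 : R.le a b) (h2 : a ≠ b) :
    {s | s ∈ ({a, b} : Set R.V) ∧ R.le s a}.ncard = 1 := by
  haveI := R.linear
  have : {s | s ∈ ({a, b} : Set R.V) ∧ R.le s a} = {a} := by
    ext s
    simp only [Set.mem_insert_iff, Set.mem_singleton_iff, Set.mem_setOf_eq]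
    constructor
    · rintro ⟨hs | hs, hle⟩
      · exact hs
      · subst hs
        exact (h2 (antisymm_of R.le h1 hle)).elim
    · intro hs
      subst hs
      exact ⟨Or.inl rfl, refl_of R.le s⟩
  rw [this, Set.ncard_singleton]

theorem rank_pair_hi {a b : R.V} (h1 : R.le a b) (h2 : a ≠ b) :
    {s | s ∈ ({a, b} : Set R.V) ∧ R.le s b}.ncard = 2 := by
  haveI := R.linear
  have : {s | s ∈ ({a, b} : Set R.V) ∧ R.le s b} = {a, b} := by
    ext s
    simp only [Set.mem_insert_iff, Set.mem_singleton_iff, Set.mem_setOf_eq]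
    constructor
    · exact fun h => h.1
    · rintro (hs | hs) <;> subst hs
      · exact ⟨Or.inl rfl, h1⟩
      · exact ⟨Or.inr rfl, refl_of R.le s⟩
  rw [this, Set.ncard_pair h2]

theorem rank_tri_lo {a b c : R.V} (hab : R.le a b) (hbc : R.le b c)
    (h2 : a ≠ b) (h3 : b ≠ c) (h4 : a ≠ c) :
    {s | s ∈ ({a, b, c} : Set R.V) ∧ R.le s a}.ncard = 1 := by
  haveI := R.linear
  have : {s | s ∈ ({a, b, c} : Set R.V) ∧ R.le s a} = {a} := by
    ext s
    simp only [Set.mem_insert_iff, Set.mem_singleton_iff, Set.mem_setOf_eq]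
    constructor
    · rintro ⟨hs | hs | hs, hle⟩
      · exact hs
      · subst hs
        exact (h2 (antisymm_of R.le hab hle)).elim
      · subst hs
        exact (h4 (antisymm_of R.le (trans_of R.le hab hbc) hle)).elim
    · intro hs
      subst hs
      exact ⟨Or.inl rfl, refl_of R.le s⟩
  rw [this, Set.ncard_singleton]

theorem rank_tri_mid {a b c : R.V} (hab : R.le a b) (hbc : R.le b c)
    (h2 : a ≠ b) (h3 : b ≠ c) (h4 : a ≠ c) :
    {s | s ∈ ({a, b, c} : Set R.V) ∧ R.le s b}.ncard = 2 := by
  haveI := R.linear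
  have : {s | s ∈ ({a, b, c} : Set R.V) ∧ R.le s b} = {a, b} := by
    ext s
    simp only [Set.mem_insert_iff, Set.mem_singleton_iff, Set.mem_setOf_eq]
    constructor
    · rintro ⟨hs | hs | hs, hle⟩
      · exact Or.inl hs
      · exact Or.inr hs
      · subst hs
        exact (h3 (antisymm_of R.le hbc hle)).elim
    · rintro (hs | hs) <;> subst hs
      · exact ⟨Or.inl rfl, hab⟩
      · exact ⟨Or.inr (Or.inl rfl), refl_of R.le s⟩
  rw [this, Set.ncard_pair h2]

theorem rank_tri_hi {a b c : R.V} (hab : R.le a b) (hbc : R.le b c)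
    (h2 : a ≠ b) (h3 : b ≠ c) (h4 : a ≠ c) :
    {s | s ∈ ({a, b, c} : Set R.V) ∧ R.le s c}.ncard = 3 := by
  haveI := R.linear
  have : {s | s ∈ ({a, b, c} : Set R.V) ∧ R.le s c} = {a, b, c} := by
    ext s
    simp only [Set.mem_insert_iff, Set.mem_singleton_iff, Set.mem_setOf_eq]
    constructor
    · exact fun h => h.1
    · rintro (hs | hs | hs) <;> subst hs
      · exact ⟨Or.inl rfl, trans_of R.le hab hbc⟩
      · exact ⟨Or.inr (Or.inl rfl), hbc⟩
      · exact ⟨Or.inr (Or.inr rfl), refl_of R.le s⟩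
  rw [this]
  rw [Set.ncard_insert_of_notMem (by simp [h2, h4]) ((Set.finite_singleton c).insert b),
    Set.ncard_pair h3]

end SmallRanks

section Facts
variable {R : OrdBin ι} {u w : R.V}

theorem fact_pair (hEq : EqR R u w) {z : R.V} (hb : Btw R u z w) :
    (∀ i, (R.rel i u u ↔ R.rel i z z) ∧ (R.rel i z z ↔ R.rel i w w)) ∧ dEq R u z z w := by
  classical
  haveI := R.linear
  obtain ⟨⟨huz, huz'⟩, hzw, hzw'⟩ := hb
  have hiso : Iso (R.restrict {u, z}) (R.restrict {z, w}) := by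
    have h0 := EqR_eqF hEq {z} (Set.finite_singleton z)
      (by simpa using huz') (by simpa using (Ne.symm hzw'))
    have hset : (insert w {z} : Set R.V) = {z, w} := Set.pair_comm w z
    unfold EqF at h0
    rwa [hset] at h0
  have e1 : (fun v => if v = u then z else w) u = z := if_pos rfl
  have e2 : (fun v => if v = u then z else w) z = w := if_neg (Ne.symm huz')
  beta_reduce at e1 e2
  have key := rel_transfer ((Set.finite_singleton w).insert z) hiso
    (fun v => if v = u then z else w)
    (by
      rintro v (rfl | rfl)
      · rw [e1]; exact Or.inl rfl
      · rw [e2]; exact Or.inr rfl)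
    (by
      rintro v (rfl | rfl)
      · rw [e1, rank_pair_lo huz huz', rank_pair_lo hzw hzw']
      · rw [e2, rank_pair_hi huz huz', rank_pair_hi hzw hzw'])
  have ku : u ∈ ({u, z} : Set R.V) := Or.inl rfl
  have kz : z ∈ ({u, z} : Set R.V) := Or.inr rfl
  constructor
  · intro i
    constructor
    · have h := key u ku u ku i
      rwa [e1] at h
    · have h := key z kz z kz i
      rwa [e2] at h
  · intro i
    constructor
    · have h := key u ku z kz i
      rwa [e1, e2] at h
    · have h := key z kz u ku i
      rwa [e1, e2] at h

theorem fact_d2 (hEq : EqR R u w) {z z' : R.V} (hb : Btw R u z w) (hb' : Btw R u z' w)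
    (hzz : R.le z z') (hne : z ≠ z') : dEq R u z z z' ∧ dEq R z z' z' w := by
  classical
  haveI := R.linear
  obtain ⟨⟨huz, huz'⟩, hzw, hzw'⟩ := hb
  obtain ⟨⟨huz2, huz2'⟩, hz2w, hz2w'⟩ := hb'
  have hiso : Iso (R.restrict {u, z, z'}) (R.restrict {z, z', w}) := by
    have h0 := EqR_eqF hEq {z, z'} ((Set.finite_singleton z').insert z)
      (by simp [huz', huz2']) (by simp [Ne.symm hzw', Ne.symm hz2w'])
    have hset : (insert w {z, z'} : Set R.V) = {z, z', w} := by
      ext s; simp only [Set.mem_insert_iff, Set.mem_singleton_iff]; tauto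
    unfold EqF at h0
    rwa [hset] at h0
  have e1 : (fun v => if v = u then z else if v = z then z' else w) u = z := if_pos rfl
  have e2 : (fun v => if v = u then z else if v = z then z' else w) z = z' :=
    (if_neg (Ne.symm huz')).trans (if_pos rfl)
  have e3 : (fun v => if v = u then z else if v = z then z' else w) z' = w :=
    (if_neg (Ne.symm huz2')).trans (if_neg (Ne.symm hne))
  beta_reduce at e1 e2 e3
  have key := rel_transfer (((Set.finite_singleton w).insert z').insert z) hiso
    (fun v => if v = u then z else if v = z then z' else w)
    (by
      rintro v (rfl | rfl | rfl)
      · rw [e1]; exact Or.inl rfl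
      · rw [e2]; exact Or.inr (Or.inl rfl)
      · rw [e3]; exact Or.inr (Or.inr rfl))
    (by
      rintro v (rfl | rfl | rfl)
      · rw [e1, rank_tri_lo huz hzz huz' hne huz2', rank_tri_lo hzz hz2w hne hz2w' hzw']
      · rw [e2, rank_tri_mid huz hzz huz' hne huz2', rank_tri_mid hzz hz2w hne hz2w' hzw']
      · rw [e3, rank_tri_hi huz hzz huz' hne huz2', rank_tri_hi hzz hz2w hne hz2w' hzw'])
  have ku : u ∈ ({u, z, z'} : Set R.V) := Or.inl rfl
  have kz : z ∈ ({u, z, z'} : Set R.V) := Or.inr (Or.inl rfl)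
  have kz' : z' ∈ ({u, z, z'} : Set R.V) := Or.inr (Or.inr rfl)
  constructor
  · intro i
    constructor
    · have h := key u ku z kz i
      rwa [e1, e2] at h
    · have h := key z kz u ku i
      rwa [e1, e2] at h
  · intro i
    constructor
    · have h := key z kz z' kz' i
      rwa [e2, e3] at h
    · have h := key z' kz' z kz i
      rwa [e2, e3] at h

theorem fact_d3 (hEq : EqR R u w) {z t : R.V} (hb : Btw R u z w)
    (ht : ¬(R.le u t ∧ R.le t w)) : dEq R u t z t ∧ dEq R z t w t := by
  classical
  haveI := R.linear
  obtain ⟨⟨huz, huz'⟩, hzw, hzw'⟩ := hb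
  have huw : R.le u w := trans_of R.le huz hzw
  have hnuw : u ≠ w := by
    rintro rfl
    exact huz' (antisymm_of R.le huz hzw)
  have hpos : (R.le t u ∧ t ≠ u) ∨ (R.le w t ∧ w ≠ t) := by
    rcases total_of R.le u t with h | h
    · rcases total_of R.le t w with h' | h'
      · exact (ht ⟨h, h'⟩).elim
      · refine Or.inr ⟨h', fun hh => ht ?_⟩
        rw [← hh]
        exact ⟨huw, refl_of R.le w⟩
    · refine Or.inl ⟨h, fun hh => ht ?_⟩
      rw [hh]
      exact ⟨refl_of R.le u, huw⟩
  have e1 : (fun v => if v = t then t else if v = u then z else w) t = t := if_pos rfl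
  beta_reduce at e1
  rcases hpos with ⟨htu, htu'⟩ | ⟨hwt, hwt'⟩
  · -- t < u : sets {t,u,z} and {t,z,w}
    have htz : t ≠ z := fun h => htu' (antisymm_of R.le htu (by rw [h]; exact huz))
    have htw : t ≠ w := fun h => htu' (antisymm_of R.le htu (by rw [h]; exact huw))
    have htz2 : R.le t z := trans_of R.le htu huz
    have e2 : (fun v => if v = t then t else if v = u then z else w) u = z :=
      (if_neg htu'.symm).trans (if_pos rfl)
    have e3 : (fun v => if v = t then t else if v = u then z else w) z = w :=
      (if_neg (Ne.symm htz)).trans (if_neg (Ne.symm huz'))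
    beta_reduce at e2 e3
    have hiso : Iso (R.restrict {t, u, z}) (R.restrict {t, z, w}) := by
      have h0 := EqR_eqF hEq {z, t} ((Set.finite_singleton t).insert z)
        (by simp [huz', Ne.symm htu']) (by simp [Ne.symm hzw', Ne.symm htw])
      have d1 : (insert u {z, t} : Set R.V) = {t, u, z} := by
        ext s; simp only [Set.mem_insert_iff, Set.mem_singleton_iff]; tauto
      have d2 : (insert w {z, t} : Set R.V) = {t, z, w} := by
        ext s; simp only [Set.mem_insert_iff, Set.mem_singleton_iff]; tauto
      unfold EqF at h0
      rwa [d1, d2] at h0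
    have key := rel_transfer (((Set.finite_singleton w).insert z).insert t) hiso
      (fun v => if v = t then t else if v = u then z else w)
      (by
        rintro v (rfl | rfl | rfl)
        · rw [e1]; exact Or.inl rfl
        · rw [e2]; exact Or.inr (Or.inl rfl)
        · rw [e3]; exact Or.inr (Or.inr rfl))
      (by
        rintro v (rfl | rfl | rfl)
        · rw [e1, rank_tri_lo htu huz htu' huz' htz, rank_tri_lo htz2 hzw htz hzw' htw]
        · rw [e2, rank_tri_mid htu huz htu' huz' htz, rank_tri_mid htz2 hzw htz hzw' htw]
        · rw [e3, rank_tri_hi htu huz htu' huz' htz, rank_tri_hi htz2 hzw htz hzw' htw])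
    have kt : t ∈ ({t, u, z} : Set R.V) := Or.inl rfl
    have ku : u ∈ ({t, u, z} : Set R.V) := Or.inr (Or.inl rfl)
    have kz : z ∈ ({t, u, z} : Set R.V) := Or.inr (Or.inr rfl)
    constructor
    · intro i
      constructor
      · have h := key u ku t kt i
        rwa [e1, e2] at h
      · have h := key t kt u ku i
        rwa [e1, e2] at h
    · intro i
      constructor
      · have h := key z kz t kt i
        rwa [e1, e3] at h
      · have h := key t kt z kz i
        rwa [e1, e3] at h
  · -- w < t : sets {u,z,t} and {z,w,t}
    have hzt : z ≠ t := fun h => hwt' (antisymm_of R.le hwt (by rw [h] at hzw; exact hzw))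
    have hut : u ≠ t := fun h => hwt' (antisymm_of R.le hwt (by rw [h] at huw; exact huw))
    have hzt2 : R.le z t := trans_of R.le hzw hwt
    have e2 : (fun v => if v = t then t else if v = u then z else w) u = z :=
      (if_neg hut).trans (if_pos rfl)
    have e3 : (fun v => if v = t then t else if v = u then z else w) z = w :=
      (if_neg hzt).trans (if_neg (Ne.symm huz'))
    beta_reduce at e2 e3
    have hiso : Iso (R.restrict {u, z, t}) (R.restrict {z, w, t}) := by
      have h0 := EqR_eqF hEq {z, t} ((Set.finite_singleton t).insert z)
        (by simp [huz', hut]) (by simp [Ne.symm hzw', hwt'])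
      have d2 : (insert w {z, t} : Set R.V) = {z, w, t} := by
        ext s; simp only [Set.mem_insert_iff, Set.mem_singleton_iff]; tauto
      unfold EqF at h0
      rwa [d2] at h0
    have key := rel_transfer (((Set.finite_singleton t).insert w).insert z) hiso
      (fun v => if v = t then t else if v = u then z else w)
      (by
        rintro v (rfl | rfl | rfl)
        · rw [e2]; exact Or.inl rfl
        · rw [e3]; exact Or.inr (Or.inl rfl)
        · rw [e1]; exact Or.inr (Or.inr rfl))
      (by
        rintro v (rfl | rfl | rfl)
        · rw [e2, rank_tri_lo huz hzt2 huz' hzt hut, rank_tri_lo hzw hwt hzw' hwt' hzt]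
        · rw [e3, rank_tri_mid huz hzt2 huz' hzt hut, rank_tri_mid hzw hwt hzw' hwt' hzt]
        · rw [e1, rank_tri_hi huz hzt2 huz' hzt hut, rank_tri_hi hzw hwt hzw' hwt' hzt])
    have ku : u ∈ ({u, z, t} : Set R.V) := Or.inl rfl
    have kz : z ∈ ({u, z, t} : Set R.V) := Or.inr (Or.inl rfl)
    have kt : t ∈ ({u, z, t} : Set R.V) := Or.inr (Or.inr rfl)
    constructor
    · intro i
      constructor
      · have h := key u ku t kt i
        rwa [e1, e2] at h
      · have h := key t kt u ku i
        rwa [e1, e2] at h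
    · intro i
      constructor
      · have h := key z kz t kt i
        rwa [e1, e3] at h
      · have h := key t kt z kz i
        rwa [e1, e3] at h

theorem fact_top {u v w : R.V} (hEq : EqR R u v) (huv : R.le u v) (hneuv : u ≠ v)
    (hvw : R.le v w) (hnevw : v ≠ w) : dEq R u w v w := by
  classical
  haveI := R.linear
  have huw : R.le u w := trans_of R.le huv hvw
  have hnuw : u ≠ w := by
    rintro rfl
    exact hneuv (antisymm_of R.le huv hvw)
  have hiso : Iso (R.restrict {u, w}) (R.restrict {v, w}) :=
    EqR_eqF hEq {w} (Set.finite_singleton w)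
      (by simpa using hnuw) (by simpa using hnevw)
  have e1 : (fun s => if s = u then v else w) u = v := if_pos rfl
  have e2 : (fun s => if s = u then v else w) w = w := if_neg (Ne.symm hnuw)
  beta_reduce at e1 e2
  have key := rel_transfer ((Set.finite_singleton w).insert v) hiso
    (fun s => if s = u then v else w)
    (by
      rintro s (rfl | rfl)
      · rw [e1]; exact Or.inl rfl
      · rw [e2]; exact Or.inr rfl)
    (by
      rintro s (rfl | rfl)
      · rw [e1, rank_pair_lo huw hnuw, rank_pair_lo hvw hnevw]
      · rw [e2, rank_pair_hi huw hnuw, rank_pair_hi hvw hnevw])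
  have ku : u ∈ ({u, w} : Set R.V) := Or.inl rfl
  have kw : w ∈ ({u, w} : Set R.V) := Or.inr rfl
  intro i
  constructor
  · have h := key u ku w kw i
    rwa [e1, e2] at h
  · have h := key w kw u ku i
    rwa [e1, e2] at h

theorem const_u (hEq : EqR R u w) {z z' : R.V} (hb : Btw R u z w) (hb' : Btw R u z' w) :
    dEq R u z u z' := by
  haveI := R.linear
  have main : ∀ z z' : R.V, Btw R u z w → Btw R u z' w → R.le z z' → z ≠ z' →
      dEq R u z u z' := by
    intro a b hba hbb hle hne
    have d2 := fact_d2 hEq hba hbb hle hne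
    have d1' := (fact_pair hEq hbb).2
    exact dEq_trans (dEq_trans d2.1 d2.2) (dEq_symm d1')
  rcases eq_or_ne z z' with rfl | hne
  · exact dEq_refl R u z
  rcases total_of R.le z z' with h | h
  · exact main z z' hb hb' h hne
  · exact dEq_symm (main z' z hb' hb h (Ne.symm hne))

theorem const (hEq : EqR R u w) {z₀ : R.V} (hb₀ : Btw R u z₀ w) :
    ∀ p q, R.le u p → R.le p q → R.le q w → p ≠ q → ¬(p = u ∧ q = w) → dEq R p q u z₀ := by
  haveI := R.linear
  intro p q hup hpq hqw hne hnot
  by_cases hpu : p = u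
  · subst hpu
    have hqwne : q ≠ w := fun h => hnot ⟨rfl, h⟩
    exact const_u hEq ⟨⟨hpq, hne⟩, hqw, hqwne⟩ hb₀
  · by_cases hqw' : q = w
    · subst hqw'
      have hbp : Btw R u p q := ⟨⟨hup, fun h => hpu h.symm⟩, hpq, hne⟩
      have h1 := (fact_pair hEq hbp).2
      -- h1 : dEq R u p p q, want dEq R p q u z₀
      exact dEq_trans (dEq_symm h1) (const_u hEq hbp hb₀)
    · have hpw : p ≠ w := by
        intro h
        subst h
        exact hne (antisymm_of R.le hpq hqw)
      have hqu : q ≠ u := fun h =>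
        hpu (antisymm_of R.le (by rw [← h]; exact hpq) hup)
      have hbp : Btw R u p w := ⟨⟨hup, fun h => hpu h.symm⟩, trans_of R.le hpq hqw, hpw⟩
      have hbq : Btw R u q w := ⟨⟨trans_of R.le hup hpq, fun h => hqu h.symm⟩, hqw, hqw'⟩
      have d2 := (fact_d2 hEq hbp hbq hpq hne).1
      -- d2 : dEq R u p p q
      exact dEq_trans (dEq_symm d2) (const_u hEq hbp hb₀)

end Facts

theorem shiftIso {R : OrdBin ι} {x x' : R.V} (hxx : R.le x x') (hnexx : x ≠ x')
    (K0 : ∀ p, R.le x p → R.le p x' → ∀ i, R.rel i p p ↔ R.rel i x x)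
    (K1 : ∀ p p' t, R.le x p → R.le p x' → R.le x p' → R.le p' x' →
      ¬(R.le x t ∧ R.le t x') → dEq R p t p' t)
    (K2 : ∀ p q p' q', R.le x p → R.le p x' → R.le x q → R.le q x' →
      R.le x p' → R.le p' x' → R.le x q' → R.le q' x' →
      R.le p q → R.le p' q' → p ≠ q → p' ≠ q' → dEq R p q p' q')
    {F : Set R.V} (hF : F.Finite) (hxF : x ∉ F) (hx'F : x' ∉ F) :
    EqF R F x x' := by
  classical
  letI := LO R
  haveI := R.linear
  have hDfin : (insert x F).Finite := hF.insert x
  have hD'fin : (insert x' F).Finite := hF.insert x'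
  haveI iD : Fintype ↥(insert x F) := hDfin.fintype
  haveI iD' : Fintype ↥(insert x' F) := hD'fin.fintype
  have c1 : (insert x F).ncard = Fintype.card ↥(insert x F) :=
    (Set.ncard_eq_toFinset_card' _).trans (Set.toFinset_card _)
  have c2 : (insert x' F).ncard = Fintype.card ↥(insert x' F) :=
    (Set.ncard_eq_toFinset_card' _).trans (Set.toFinset_card _)
  have cn : (insert x F).ncard = (insert x' F).ncard := by
    rw [Set.ncard_insert_of_notMem hxF hF, Set.ncard_insert_of_notMem hx'F hF]
  have hcard : Fintype.card ↥(insert x' F) = Fintype.card ↥(insert x F) :=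
    c2.symm.trans (cn.symm.trans c1)
  have e : ↥(insert x F) ≃o ↥(insert x' F) :=
    OrderIso.trans (OrderIso.symm (monoEquivOfFin ↥(insert x F) rfl))
      (monoEquivOfFin ↥(insert x' F) hcard)
  have hle : ∀ a b : ↥(insert x F), R.le a.1 b.1 ↔ R.le (e a).1 (e b).1 :=
    fun a b => Iff.symm e.le_iff_le
  have hrk := rank_eq (R := R) (D := insert x F) (D' := insert x' F) e.toEquiv hle
  -- P1 : e fixes points of F outside [x,x']
  have P1 : ∀ (t : R.V) (htF : t ∈ F), ¬(R.le x t ∧ R.le t x') →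
      (e ⟨t, Or.inr htF⟩).1 = t := by
    intro t htF hnot
    have htx : t ≠ x := fun h => hxF (h ▸ htF)
    have htx' : t ≠ x' := fun h => hx'F (h ▸ htF)
    refine rank_inj hD'fin (e ⟨t, Or.inr htF⟩).2 (Or.inr htF) ?_
    have base : {s | s ∈ insert x F ∧ R.le s t}.ncard =
        {s | s ∈ insert x' F ∧ R.le s (e ⟨t, Or.inr htF⟩).1}.ncard :=
      hrk ⟨t, Or.inr htF⟩
    rw [← base]
    -- it remains: ncard {s ∈ insert x F | le s t} = ncard {s ∈ insert x' F | le s t}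
    rcases total_of R.le t x with hlow | hhigh
    · -- t below x
      have hs1 : {s | s ∈ insert x F ∧ R.le s t} = {s | s ∈ F ∧ R.le s t} := by
        ext s
        simp only [Set.mem_insert_iff, Set.mem_setOf_eq]
        constructor
        · rintro ⟨rfl | hs, hst⟩
          · exact absurd (antisymm_of R.le hlow hst) htx
          · exact ⟨hs, hst⟩
        · exact fun h => ⟨Or.inr h.1, h.2⟩
      have hs2 : {s | s ∈ insert x' F ∧ R.le s t} = {s | s ∈ F ∧ R.le s t} := by
        ext s
        simp only [Set.mem_insert_iff, Set.mem_setOf_eq]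
        constructor
        · rintro ⟨rfl | hs, hst⟩
          · exact absurd (antisymm_of R.le (trans_of R.le hlow hxx) hst) htx'
          · exact ⟨hs, hst⟩
        · exact fun h => ⟨Or.inr h.1, h.2⟩
      rw [hs1, hs2]
    · -- x ≤ t, hence x' ≤ t since t outside the interval
      have hx't : R.le x' t := by
        rcases total_of R.le t x' with h | h
        · exact absurd ⟨hhigh, h⟩ hnot
        · exact h
      have hxt : R.le x t := hhigh
      have hs1 : {s | s ∈ insert x F ∧ R.le s t} = insert x {s | s ∈ F ∧ R.le s t} := by
        ext s
        simp only [Set.mem_insert_iff, Set.mem_setOf_eq]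
        constructor
        · rintro ⟨rfl | hs, hst⟩
          · exact Or.inl rfl
          · exact Or.inr ⟨hs, hst⟩
        · rintro (rfl | h)
          · exact ⟨Or.inl rfl, hxt⟩
          · exact ⟨Or.inr h.1, h.2⟩
      have hs2 : {s | s ∈ insert x' F ∧ R.le s t} = insert x' {s | s ∈ F ∧ R.le s t} := by
        ext s
        simp only [Set.mem_insert_iff, Set.mem_setOf_eq]
        constructor
        · rintro ⟨rfl | hs, hst⟩
          · exact Or.inl rfl
          · exact Or.inr ⟨hs, hst⟩
        · rintro (rfl | h)
          · exact ⟨Or.inl rfl, hx't⟩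
          · exact ⟨Or.inr h.1, h.2⟩
      have hsub : {s | s ∈ F ∧ R.le s t}.Finite := hF.subset fun s hs => hs.1
      rw [hs1, hs2, Set.ncard_insert_of_notMem (fun h => hxF h.1) hsub,
        Set.ncard_insert_of_notMem (fun h => hx'F h.1) hsub]
  -- fix : e fixes any element of the domain outside [x,x']
  have fix : ∀ a : ↥(insert x F), ¬(R.le x a.1 ∧ R.le a.1 x') → (e a).1 = a.1 := by
    rintro ⟨a, haD⟩ hnot
    rcases haD with rfl | haF
    · exact absurd ⟨refl_of R.le a, hxx⟩ hnot
    · exact P1 a haF hnot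
  -- P2 : e maps the interval into the interval
  have P2 : ∀ a : ↥(insert x F), R.le x a.1 → R.le a.1 x' →
      R.le x (e a).1 ∧ R.le (e a).1 x' := by
    intro a h1 h2
    by_contra hnot
    have hsD' : (e a).1 ∈ insert x' F := (e a).2
    have hsF : (e a).1 ∈ F := by
      rcases hsD' with h | h
      · refine absurd ?_ hnot
        rw [h]
        exact ⟨hxx, refl_of R.le x'⟩
      · exact h
    have hfix := P1 (e a).1 hsF hnot
    have : e ⟨(e a).1, Or.inr hsF⟩ = e a := Subtype.ext hfix
    have heq : (⟨(e a).1, Or.inr hsF⟩ : ↥(insert x F)) = a := e.injective this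
    have : (e a).1 = a.1 := congrArg Subtype.val heq
    exact hnot (this ▸ ⟨h1, h2⟩)
  -- assemble the isomorphism
  refine ⟨e.toEquiv, fun a b => hle a b, ?_⟩
  intro i a b
  show R.rel i a.1 b.1 ↔ R.rel i (e a).1 (e b).1
  by_cases ha : R.le x a.1 ∧ R.le a.1 x'
  · by_cases hb : R.le x b.1 ∧ R.le b.1 x'
    · -- both inside
      have hea := P2 a ha.1 ha.2
      have heb := P2 b hb.1 hb.2
      by_cases hab : a = b
      · subst hab
        exact (K0 a.1 ha.1 ha.2 i).trans (K0 (e a).1 hea.1 hea.2 i).symm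
      · have hab1 : a.1 ≠ b.1 := fun h => hab (Subtype.ext h)
        have heab : (e a).1 ≠ (e b).1 := fun h => hab (e.injective (Subtype.ext h))
        rcases total_of R.le a.1 b.1 with h | h
        · exact (K2 a.1 b.1 (e a).1 (e b).1 ha.1 ha.2 hb.1 hb.2 hea.1 hea.2 heb.1 heb.2
            h ((hle a b).1 h) hab1 heab i).1
        · exact (K2 b.1 a.1 (e b).1 (e a).1 hb.1 hb.2 ha.1 ha.2 heb.1 heb.2 hea.1 hea.2
            h ((hle b a).1 h) (Ne.symm hab1) (Ne.symm heab) i).2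
    · -- a inside, b outside
      rw [fix b hb]
      have hea := P2 a ha.1 ha.2
      exact (K1 a.1 (e a).1 b.1 ha.1 ha.2 hea.1 hea.2 hb i).1
  · by_cases hb : R.le x b.1 ∧ R.le b.1 x'
    · rw [fix a ha]
      have heb := P2 b hb.1 hb.2
      exact (K1 b.1 (e b).1 a.1 hb.1 hb.2 heb.1 heb.2 ha i).2
    · rw [fix a ha, fix b hb]

/-- If all pairs in `[u,w]` (including `(u,w)`) carry the same relations, then `u ≃ z`
for `z` strictly between. -/
theorem case1_equiv {R : OrdBin ι} {u w z : R.V} (huw : EqR R u w) (hb : Btw R u z w)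
    (hc : dEq R u w u z) : EqR R u z := by
  haveI := R.linear
  obtain ⟨⟨huz, hneuz⟩, hzw, hnezw⟩ := hb
  have hb' : Btw R u z w := ⟨⟨huz, hneuz⟩, hzw, hnezw⟩
  have hleuw : R.le u w := trans_of R.le huz hzw
  have hconst := const huw hb'
  have hBp : ∀ p, R.le u p → R.le p z → p ≠ u → Btw R u p w := by
    intro p h1 h2 hne
    refine ⟨⟨h1, Ne.symm hne⟩, trans_of R.le h2 hzw, ?_⟩
    intro h
    exact hnezw (antisymm_of R.le hzw (by rw [← h]; exact h2))
  intro m F hFf hcard hxF hx'F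
  refine shiftIso huz hneuz ?_ ?_ ?_ hFf hxF hx'F
  · -- K0
    intro p h1 h2 i
    by_cases hpu : p = u
    · rw [hpu]
    · exact ((fact_pair huw (hBp p h1 h2 hpu)).1 i).1.symm
  · -- K1
    intro p p' t hp1 hp2 hp1' hp2' hnt
    have hd : ∀ q, R.le u q → R.le q z → dEq R q t u t := by
      intro q hq1 hq2
      by_cases hqu : q = u
      · rw [hqu]
        exact dEq_refl R u t
      · by_cases htI : R.le u t ∧ R.le t w
        · have hzt : R.le z t ∧ t ≠ z := by
            rcases total_of R.le t z with h | h
            · exact absurd ⟨htI.1, h⟩ hnt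
            · refine ⟨h, fun hh => hnt ⟨htI.1, by rw [hh]; exact refl_of R.le z⟩⟩
          have htu : t ≠ u := fun h =>
            hneuz (antisymm_of R.le huz (by rw [← h]; exact hzt.1))
          by_cases htw : t = w
          · subst htw
            have d1 := hconst q t hq1 (trans_of R.le hq2 hzt.1) (refl_of R.le t)
              (fun hh => hzt.2 (antisymm_of R.le hzt.1 (by rw [← hh]; exact hq2)).symm)
              (fun hh => hqu hh.1)
            exact dEq_trans d1 (dEq_symm hc)
          · have d1 := hconst q t hq1 (trans_of R.le hq2 hzt.1) htI.2
              (fun hh => hzt.2 (antisymm_of R.le hzt.1 (by rw [← hh]; exact hq2)).symm)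
              (fun hh => htw hh.2)
            have d2 := hconst u t (refl_of R.le u) htI.1 htI.2 (Ne.symm htu)
              (fun hh => htw hh.2)
            exact dEq_trans d1 (dEq_symm d2)
        · exact dEq_symm (fact_d3 huw (hBp q hq1 hq2 hqu) htI).1
    exact dEq_trans (hd p hp1 hp2) (dEq_symm (hd p' hp1' hp2'))
  · -- K2
    intro p q p' q' hp1 hp2 hq1 hq2 hp1' hp2' hq1' hq2' hpq hpq' hne hne'
    have hd2 : ∀ p q, R.le u p → R.le p z → R.le u q → R.le q z → R.le p q → p ≠ q →
        dEq R p q u z := by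
      intro p q hp1 hp2 hq1 hq2 hpq hne
      have hqw : q ≠ w := by
        intro h
        exact hnezw (antisymm_of R.le hzw (by rw [← h]; exact hq2))
      exact hconst p q hp1 hpq (trans_of R.le hq2 hzw) hne (fun hh => hqw hh.2)
    exact dEq_trans (hd2 p q hp1 hp2 hq1 hq2 hpq hne)
      (dEq_symm (hd2 p' q' hp1' hp2' hq1' hq2' hpq' hne'))

/-- Any two points strictly inside `]u,w[` are equivalent, when `u ≃ w`. -/
theorem inner_equiv {R : OrdBin ι} {u w : R.V} (huw : EqR R u w)
    {z₁ z₂ : R.V} (hb₁ : Btw R u z₁ w) (hb₂ : Btw R u z₂ w)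
    (h12 : R.le z₁ z₂) (hne12 : z₁ ≠ z₂) : EqR R z₁ z₂ := by
  haveI := R.linear
  have hconst := const huw hb₁
  have hBp : ∀ p, R.le z₁ p → R.le p z₂ → Btw R u p w := by
    intro p h1 h2
    refine ⟨⟨trans_of R.le hb₁.1.1 h1, ?_⟩, trans_of R.le h2 hb₂.2.1, ?_⟩
    · intro h
      exact hb₁.1.2 (antisymm_of R.le hb₁.1.1 (by rw [h]; exact h1))
    · intro h
      exact hb₂.2.2 (antisymm_of R.le hb₂.2.1 (by rw [← h]; exact h2))
  intro m F hFf hcard h1F h2F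
  refine shiftIso h12 hne12 ?_ ?_ ?_ hFf h1F h2F
  · -- K0
    intro p h1 h2 i
    exact ((fact_pair huw (hBp p h1 h2)).1 i).1.symm.trans ((fact_pair huw hb₁).1 i).1
  · -- K1
    intro p p' t hp1 hp2 hp1' hp2' hnt
    by_cases htI : R.le u t ∧ R.le t w
    · have htz : (R.le t z₁ ∧ t ≠ z₁) ∨ (R.le z₂ t ∧ t ≠ z₂) := by
        rcases total_of R.le z₁ t with h | h
        · rcases total_of R.le t z₂ with h' | h'
          · exact (hnt ⟨h, h'⟩).elim
          · exact Or.inr ⟨h', fun hh => hnt ⟨h, by rw [hh]; exact refl_of R.le z₂⟩⟩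
        · exact Or.inl ⟨h, fun hh => hnt ⟨by rw [hh]; exact refl_of R.le z₁,
            by rw [hh]; exact h12⟩⟩
      rcases htz with ⟨hlt, hnet⟩ | ⟨hgt, hnet⟩
      · have hd : ∀ q, R.le z₁ q → R.le q z₂ → dEq R t q u z₁ := by
          intro q hq1 hq2
          refine hconst t q htI.1 (trans_of R.le hlt hq1) (hBp q hq1 hq2).2.1 ?_ ?_
          · intro hh
            exact hnet (antisymm_of R.le hlt (by rw [hh]; exact hq1))
          · exact fun hh => (hBp q hq1 hq2).2.2 hh.2
        exact dEq_flip (dEq_trans (hd p hp1 hp2) (dEq_symm (hd p' hp1' hp2')))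
      · have hd : ∀ q, R.le z₁ q → R.le q z₂ → dEq R q t u z₁ := by
          intro q hq1 hq2
          refine hconst q t (hBp q hq1 hq2).1.1 (trans_of R.le hq2 hgt) htI.2 ?_ ?_
          · intro hh
            exact hnet (antisymm_of R.le hgt (by rw [← hh]; exact hq2)).symm
          · exact fun hh => (hBp q hq1 hq2).1.2 hh.1.symm
        exact dEq_trans (hd p hp1 hp2) (dEq_symm (hd p' hp1' hp2'))
    · have hd : ∀ q, R.le z₁ q → R.le q z₂ → dEq R u t q t := fun q hq1 hq2 =>
        (fact_d3 huw (hBp q hq1 hq2) htI).1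
      exact dEq_trans (dEq_symm (hd p hp1 hp2)) (hd p' hp1' hp2')
  · -- K2
    intro p q p' q' hp1 hp2 hq1 hq2 hp1' hp2' hq1' hq2' hpq hpq' hne hne'
    have hd2 : ∀ p q, R.le z₁ p → R.le p z₂ → R.le z₁ q → R.le q z₂ → R.le p q → p ≠ q →
        dEq R p q u z₁ := by
      intro p q hp1 hp2 hq1 hq2 hpq hne
      exact hconst p q (hBp p hp1 hp2).1.1 hpq (hBp q hq1 hq2).2.1 hne
        (fun hh => (hBp p hp1 hp2).1.2 hh.1.symm)
    exact dEq_trans (hd2 p q hp1 hp2 hq1 hq2 hpq hne)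
      (dEq_symm (hd2 p' q' hp1' hp2' hq1' hq2' hpq' hne'))

end OrdBin
end AuxDev

/-- Every equivalence class `A` of `≃_R` on an ordered binary structure `R`
is either an interval of the linear order `(V, ≤)`, or a two-element set `{x, y}` with
`x < y` such that the open interval `]x,y[` is itself an equivalence class of `≃_R`. -/
theorem equivalence_class_structure {ι : Type} (R : OrdBin ι)
    (A : Set R.V) (hA : ∃ a : R.V, A = {y | OrdBin.EqR R a y}) :
    OrdBin.IntervalLe R A ∨
      ∃ x y : R.V, R.le x y ∧ x ≠ y ∧ A = {x, y} ∧
        ∃ b : R.V,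
          {z : R.V | (R.le x z ∧ x ≠ z) ∧ (R.le z y ∧ z ≠ y)} =
            {w : R.V | OrdBin.EqR R b w} := by
  classical
  haveI := R.linear
  obtain ⟨a, hAa⟩ := hA
  by_cases hInt : OrdBin.IntervalLe R A
  · exact Or.inl hInt
  right
  unfold OrdBin.IntervalLe at hInt
  push_neg at hInt
  obtain ⟨u, hu, w, hw, z, huz, hzw, hzA⟩ := hInt
  have hmem : ∀ v, v ∈ A ↔ OrdBin.EqR R a v := by
    intro v
    rw [hAa]
    exact Iff.rfl
  have hau : OrdBin.EqR R a u := (hmem u).1 hu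
  have haw : OrdBin.EqR R a w := (hmem w).1 hw
  have haz : ¬ OrdBin.EqR R a z := fun h => hzA ((hmem z).2 h)
  have hneuz : u ≠ z := fun h => haz (by rw [← h]; exact hau)
  have hnezw : z ≠ w := fun h => haz (by rw [h]; exact haw)
  have hbzw : OrdBin.Btw R u z w := ⟨⟨huz, hneuz⟩, hzw, hnezw⟩
  have hleuw : R.le u w := trans_of R.le huz hzw
  have hneuw : u ≠ w := fun h =>
    hneuz (antisymm_of R.le huz (by rw [h]; exact hzw))
  have huw : OrdBin.EqR R u w := OrdBin.EqR_trans (OrdBin.EqR_symm hau) haw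
  have hconst := OrdBin.const huw hbzw
  -- main dichotomy
  by_cases hc : OrdBin.dEq R u w u z
  · -- then z would be equivalent to u: contradiction
    have h1 : OrdBin.EqR R u z := OrdBin.case1_equiv huw hbzw hc
    exact absurd (OrdBin.EqR_trans hau h1) haz
  · refine ⟨u, w, hleuw, hneuw, ?_, z, ?_⟩
    · -- A = {u, w}
      rw [hAa]
      ext v
      simp only [Set.mem_setOf_eq, Set.mem_insert_iff, Set.mem_singleton_iff]
      constructor
      · intro hav
        by_contra hne
        push_neg at hne
        obtain ⟨hvu, hvw⟩ := hne
        rcases total_of R.le v u with h | h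
        · -- v < u
          have hvw' : OrdBin.EqR R v w := OrdBin.EqR_trans (OrdBin.EqR_symm hav) haw
          have hcv := OrdBin.const hvw' (⟨⟨h, hvu⟩, hleuw, hneuw⟩ :
            OrdBin.Btw R v u w)
          have d1 : OrdBin.dEq R u z v u := hcv u z h huz hzw hneuz
            (fun hh => hvu hh.1.symm)
          have d2 : OrdBin.dEq R u w v u := hcv u w h hleuw (refl_of R.le w) hneuw
            (fun hh => hvu hh.1.symm)
          exact hc (OrdBin.dEq_trans d2 (OrdBin.dEq_symm d1))
        · rcases total_of R.le v w with h' | h'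
          · -- u ≤ v ≤ w strictly: v between
            have huv : OrdBin.EqR R u v := OrdBin.EqR_trans (OrdBin.EqR_symm hau) hav
            have dtop : OrdBin.dEq R u w v w := OrdBin.fact_top huv h (Ne.symm hvu) h' hvw
            have d2 : OrdBin.dEq R v w u z := hconst v w h h' (refl_of R.le w)
              hvw (fun hh => hvu hh.1)
            exact hc (OrdBin.dEq_trans dtop d2)
          · -- w < v
            have huv : OrdBin.EqR R u v := OrdBin.EqR_trans (OrdBin.EqR_symm hau) hav
            have hznev : z ≠ v := fun hh =>
              hnezw (antisymm_of R.le hzw (by rw [hh]; exact h'))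
            have hcv := OrdBin.const huv (⟨⟨huz, hneuz⟩, trans_of R.le hzw h', hznev⟩ :
              OrdBin.Btw R u z v)
            have d1 : OrdBin.dEq R u w u z := hcv u w (refl_of R.le u) hleuw h'
              hneuw (fun hh => hvw hh.2.symm)
            exact hc d1
      · rintro (rfl | rfl)
        · exact hau
        · exact haw
    · -- the open interval is the class of z
      ext v
      simp only [Set.mem_setOf_eq]
      constructor
      · rintro ⟨⟨huv, hnuv⟩, hvw, hnvw⟩
        have hbv : OrdBin.Btw R u v w := ⟨⟨huv, hnuv⟩, hvw, hnvw⟩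
        rcases eq_or_ne z v with rfl | hzv
        · exact OrdBin.EqR_refl R z
        rcases total_of R.le z v with h | h
        · exact OrdBin.inner_equiv huw hbzw hbv h hzv
        · exact OrdBin.EqR_symm (OrdBin.inner_equiv huw hbv hbzw h (Ne.symm hzv))
      · intro hzv
        by_contra hnb
        have hvu : v ≠ u := by
          rintro rfl
          exact haz (OrdBin.EqR_trans hau (OrdBin.EqR_symm hzv))
        have hvw : v ≠ w := by
          rintro rfl
          exact haz (OrdBin.EqR_trans haw (OrdBin.EqR_symm hzv))
        -- v outside [u,w]
        rcases total_of R.le u v with h | h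
        · rcases total_of R.le v w with h' | h'
          · exact hnb ⟨⟨h, fun hh => hvu hh.symm⟩, h', hvw⟩
          · -- w ≤ v, w ≠ v : use pair (z, v) with w inside, t = u outside
            have hzlev : R.le z v := trans_of R.le hzw h'
            have hznev : z ≠ v := fun hh =>
              hnezw (antisymm_of R.le hzw (by rw [hh]; exact h'))
            have hbzwv : OrdBin.Btw R z w v := ⟨⟨hzw, hnezw⟩, h', fun hh => hvw hh.symm⟩
            have hut : ¬(R.le z u ∧ R.le u v) := fun hh =>
              hneuz (antisymm_of R.le huz hh.1)
            have d := (OrdBin.fact_d3 hzv hbzwv hut).1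
            -- d : dEq R z u w u
            exact hc (OrdBin.dEq_symm (OrdBin.dEq_flip d))
        · -- v ≤ u, v ≠ u : use pair (v, z) with u inside, t = w outside
          have hvz : OrdBin.EqR R v z := OrdBin.EqR_symm hzv
          have hbvuz : OrdBin.Btw R v u z := ⟨⟨h, hvu⟩, huz, hneuz⟩
          have hwt : ¬(R.le v w ∧ R.le w z) := fun hh =>
            hnezw (antisymm_of R.le hzw hh.2)
          have d := (OrdBin.fact_d3 hvz hbvuz hwt).2
          -- d : dEq R u w z w
          have d2 : OrdBin.dEq R z w u z := hconst z w huz hzw (refl_of R.le w)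
            hnezw (fun hh => hneuz hh.1.symm)
          exact hc (OrdBin.dEq_trans d d2)
end

section
/- Let R = (V, ≤, (ρ_i)_{i∈I}) be an ordered binary structure and let x < x' < y < y' in V. If x ≃_{≤2,R} y and x' ≃_{≤2,R} y', then x ≃_{≤2,R} y'. -/
namespace SandwichAux

open OrdBin

variable {ι : Type} (R : OrdBin ι)

/-- strict order for `R.le` -/
def SLT (a b : R.V) : Prop := R.le a b ∧ a ≠ b

/-- equal loops -/
def Lp (a b : R.V) : Prop := ∀ i, R.rel i a a ↔ R.rel i b b

/-- equal pair labels (same as dEq) -/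
def Dd (a b c d : R.V) : Prop :=
  ∀ i, (R.rel i a b ↔ R.rel i c d) ∧ (R.rel i b a ↔ R.rel i d c)

variable {R}

lemma le_refl' (a : R.V) : R.le a a := by
  haveI := R.linear; exact refl_of R.le a

lemma le_trans' {a b c : R.V} (h : R.le a b) (h' : R.le b c) : R.le a c := by
  haveI := R.linear; exact _root_.trans_of R.le h h'

lemma le_antisymm' {a b : R.V} (h : R.le a b) (h' : R.le b a) : a = b := by
  haveI := R.linear; exact antisymm_of R.le h h'

lemma le_total' (a b : R.V) : R.le a b ∨ R.le b a := by
  haveI := R.linear; exact total_of R.le a b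

lemma nle {a b : R.V} (h : R.le a b) (hne : a ≠ b) : ¬ R.le b a :=
  fun h' => hne (le_antisymm' h h')

lemma SLT.le {a b : R.V} (h : SLT R a b) : R.le a b := h.1
lemma SLT.ne {a b : R.V} (h : SLT R a b) : a ≠ b := h.2

lemma SLT.trans {a b c : R.V} (h : SLT R a b) (h' : SLT R b c) : SLT R a c := by
  refine ⟨le_trans' h.1 h'.1, fun hac => ?_⟩
  subst hac
  exact h.2 (le_antisymm' h.1 h'.1)

lemma SLT.trans_le {a b c : R.V} (h : SLT R a b) (h' : R.le b c) : SLT R a c := by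
  refine ⟨le_trans' h.1 h', fun hac => ?_⟩
  subst hac
  exact h.2 (le_antisymm' h.1 h')

lemma SLT.le_trans {a b c : R.V} (h : R.le a b) (h' : SLT R b c) : SLT R a c := by
  refine ⟨le_trans' h h'.1, fun hac => ?_⟩
  subst hac
  exact h'.2 (le_antisymm' h'.1 h)

lemma slt_of_le_ne {a b : R.V} (h : R.le a b) (h' : a ≠ b) : SLT R a b := ⟨h, h'⟩

lemma Lp.refl (a : R.V) : Lp R a a := fun _ => Iff.rfl
lemma Lp.symm {a b : R.V} (h : Lp R a b) : Lp R b a := fun i => (h i).symm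
lemma Lp.trans {a b c : R.V} (h : Lp R a b) (h' : Lp R b c) : Lp R a c :=
  fun i => (h i).trans (h' i)

lemma Dd.refl (a b : R.V) : Dd R a b a b := fun _ => ⟨Iff.rfl, Iff.rfl⟩
lemma Dd.symm {a b c d : R.V} (h : Dd R a b c d) : Dd R c d a b :=
  fun i => ⟨(h i).1.symm, (h i).2.symm⟩
lemma Dd.trans {a b c d e f : R.V} (h : Dd R a b c d) (h' : Dd R c d e f) :
    Dd R a b e f := fun i => ⟨(h i).1.trans (h' i).1, (h i).2.trans (h' i).2⟩
lemma Dd.rev {a b c d : R.V} (h : Dd R a b c d) : Dd R b a d c :=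
  fun i => ⟨(h i).2, (h i).1⟩

/-- Build an isomorphism of induced substructures from a function. -/
lemma iso_of_fun (A B : Set R.V) (f g : R.V → R.V)
    (hf : ∀ a ∈ A, f a ∈ B) (hg : ∀ b ∈ B, g b ∈ A)
    (hgf : ∀ a ∈ A, g (f a) = a) (hfg : ∀ b ∈ B, f (g b) = b)
    (hle : ∀ a ∈ A, ∀ a' ∈ A, R.le a a' ↔ R.le (f a) (f a'))
    (hrel : ∀ i, ∀ a ∈ A, ∀ a' ∈ A, R.rel i a a' ↔ R.rel i (f a) (f a')) :
    Iso (R.restrict A) (R.restrict B) :=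
  ⟨⟨fun a => ⟨f a.1, hf a.1 a.2⟩, fun b => ⟨g b.1, hg b.1 b.2⟩,
    fun a => Subtype.ext (hgf a.1 a.2), fun b => Subtype.ext (hfg b.1 b.2)⟩,
    fun p q => hle p.1 p.2 q.1 q.2, fun i p q => hrel i p.1 p.2 q.1 q.2⟩

lemma extract1 {a b : R.V} (h : Iso (R.restrict {a}) (R.restrict {b})) :
    Lp R a b := by
  obtain ⟨e, _, hrel⟩ := h
  have ma : a ∈ ({a} : Set R.V) := rfl
  have hb : (e ⟨a, ma⟩).1 = b := (e ⟨a, ma⟩).2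
  intro i
  have h2 : R.rel i a a ↔ R.rel i (e ⟨a, ma⟩).1 (e ⟨a, ma⟩).1 := hrel i ⟨a, ma⟩ ⟨a, ma⟩
  rwa [hb] at h2

lemma extract2 {a₁ a₂ b₁ b₂ : R.V} (ha : SLT R a₁ a₂) (hb : SLT R b₁ b₂)
    (h : Iso (R.restrict {a₁, a₂}) (R.restrict {b₁, b₂})) :
    Lp R a₁ b₁ ∧ Lp R a₂ b₂ ∧ Dd R a₁ a₂ b₁ b₂ := by
  obtain ⟨e, hle, hrel⟩ := h
  have m1 : a₁ ∈ ({a₁, a₂} : Set R.V) := by simp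
  have m2 : a₂ ∈ ({a₁, a₂} : Set R.V) := by simp
  set p1 : (R.restrict {a₁, a₂}).V := ⟨a₁, m1⟩ with hp1
  set p2 : (R.restrict {a₁, a₂}).V := ⟨a₂, m2⟩ with hp2
  have hc1 : (e p1).1 = b₁ ∨ (e p1).1 = b₂ := by
    have := (e p1).2
    simpa only [Set.mem_insert_iff, Set.mem_singleton_iff] using this
  have hc2 : (e p2).1 = b₁ ∨ (e p2).1 = b₂ := by
    have := (e p2).2
    simpa only [Set.mem_insert_iff, Set.mem_singleton_iff] using this
  have hle12 : R.le (e p1).1 (e p2).1 := (hle p1 p2).mp ha.1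
  have hne : (e p1).1 ≠ (e p2).1 := by
    intro hcc
    exact ha.2 (congrArg Subtype.val (e.injective (Subtype.ext hcc) : p1 = p2))
  have k1 : (e p1).1 = b₁ := by
    rcases hc1 with h1 | h1
    · exact h1
    · rcases hc2 with h2 | h2
      · have hba : b₂ = b₁ := le_antisymm' (by rw [h1, h2] at hle12; exact hle12) hb.1
        exact h1.trans hba
      · exact absurd (h1.trans h2.symm) hne
  have k2 : (e p2).1 = b₂ := by
    rcases hc2 with h2 | h2
    · exact absurd (k1.trans h2.symm) hne
    · exact h2
  refine ⟨fun i => ?_, fun i => ?_, fun i => ⟨?_, ?_⟩⟩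
  · have h2 : R.rel i a₁ a₁ ↔ R.rel i (e p1).1 (e p1).1 := hrel i p1 p1
    rwa [k1] at h2
  · have h2 : R.rel i a₂ a₂ ↔ R.rel i (e p2).1 (e p2).1 := hrel i p2 p2
    rwa [k2] at h2
  · have h2 : R.rel i a₁ a₂ ↔ R.rel i (e p1).1 (e p2).1 := hrel i p1 p2
    rwa [k1, k2] at h2
  · have h2 : R.rel i a₂ a₁ ↔ R.rel i (e p2).1 (e p1).1 := hrel i p2 p1
    rwa [k1, k2] at h2

lemma extract3 {a₁ a₂ a₃ b₁ b₂ b₃ : R.V}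
    (ha12 : SLT R a₁ a₂) (ha23 : SLT R a₂ a₃)
    (hb12 : SLT R b₁ b₂) (hb23 : SLT R b₂ b₃)
    (h : Iso (R.restrict {a₁, a₂, a₃}) (R.restrict {b₁, b₂, b₃})) :
    Lp R a₁ b₁ ∧ Lp R a₂ b₂ ∧ Lp R a₃ b₃ ∧
      Dd R a₁ a₂ b₁ b₂ ∧ Dd R a₁ a₃ b₁ b₃ ∧ Dd R a₂ a₃ b₂ b₃ := by
  obtain ⟨e, hle, hrel⟩ := h
  have m1 : a₁ ∈ ({a₁, a₂, a₃} : Set R.V) := by simp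
  have m2 : a₂ ∈ ({a₁, a₂, a₃} : Set R.V) := by simp
  have m3 : a₃ ∈ ({a₁, a₂, a₃} : Set R.V) := by simp
  set p1 : (R.restrict {a₁, a₂, a₃}).V := ⟨a₁, m1⟩ with hp1
  set p2 : (R.restrict {a₁, a₂, a₃}).V := ⟨a₂, m2⟩ with hp2
  set p3 : (R.restrict {a₁, a₂, a₃}).V := ⟨a₃, m3⟩ with hp3
  have hmem : ∀ p : (R.restrict ({a₁, a₂, a₃} : Set R.V)).V,
      p = p1 ∨ p = p2 ∨ p = p3 := by
    intro p
    have := p.2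
    simp only [Set.mem_insert_iff, Set.mem_singleton_iff] at this
    rcases this with h | h | h
    · exact Or.inl (Subtype.ext h)
    · exact Or.inr (Or.inl (Subtype.ext h))
    · exact Or.inr (Or.inr (Subtype.ext h))
  have ne12 : p1 ≠ p2 := fun hh => ha12.2 (congrArg Subtype.val hh)
  have ne23 : p2 ≠ p3 := fun hh => ha23.2 (congrArg Subtype.val hh)
  have hne : ∀ {p q : (R.restrict ({a₁, a₂, a₃} : Set R.V)).V},
      p ≠ q → (e p).1 ≠ (e q).1 := by
    intro p q hpq hcc
    exact hpq (e.injective (Subtype.ext hcc))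
  have hle' : ∀ p q : (R.restrict ({a₁, a₂, a₃} : Set R.V)).V,
      R.le p.1 q.1 → R.le (e p).1 (e q).1 := fun p q hpq => (hle p q).mp hpq
  have hsurj : ∀ b ∈ ({b₁, b₂, b₃} : Set R.V), ∃ p, (e p).1 = b := by
    intro b hb
    exact ⟨e.symm ⟨b, hb⟩, congrArg Subtype.val (e.apply_symm_apply _)⟩
  have hcmem : ∀ p : (R.restrict ({a₁, a₂, a₃} : Set R.V)).V,
      (e p).1 = b₁ ∨ (e p).1 = b₂ ∨ (e p).1 = b₃ := by
    intro p
    have := (e p).2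
    simpa only [Set.mem_insert_iff, Set.mem_singleton_iff] using this
  have hminB : ∀ c, c = b₁ ∨ c = b₂ ∨ c = b₃ → R.le b₁ c := by
    rintro c (rfl | rfl | rfl)
    · exact le_refl' _
    · exact hb12.1
    · exact le_trans' hb12.1 hb23.1
  have hmaxB : ∀ c, c = b₁ ∨ c = b₂ ∨ c = b₃ → R.le c b₃ := by
    rintro c (rfl | rfl | rfl)
    · exact le_trans' hb12.1 hb23.1
    · exact hb23.1
    · exact le_refl' _
  have hminc : ∀ p : (R.restrict ({a₁, a₂, a₃} : Set R.V)).V,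
      R.le (e p1).1 (e p).1 := by
    intro p
    rcases hmem p with rfl | rfl | rfl
    · exact le_refl' _
    · exact hle' p1 p2 ha12.1
    · exact hle' p1 p3 (le_trans' ha12.1 ha23.1)
  have hmaxc : ∀ p : (R.restrict ({a₁, a₂, a₃} : Set R.V)).V,
      R.le (e p).1 (e p3).1 := by
    intro p
    rcases hmem p with rfl | rfl | rfl
    · exact hle' p1 p3 (le_trans' ha12.1 ha23.1)
    · exact hle' p2 p3 ha23.1
    · exact le_refl' _
  have k1 : (e p1).1 = b₁ := by
    obtain ⟨p, hp⟩ := hsurj b₁ (by simp)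
    have := hminc p
    rw [hp] at this
    exact le_antisymm' this (hminB _ (hcmem p1))
  have k3 : (e p3).1 = b₃ := by
    obtain ⟨p, hp⟩ := hsurj b₃ (by simp)
    have := hmaxc p
    rw [hp] at this
    exact le_antisymm' (hmaxB _ (hcmem p3)) this
  have k2 : (e p2).1 = b₂ := by
    rcases hcmem p2 with h | h | h
    · exact absurd (h.trans k1.symm) (hne ne12.symm)
    · exact h
    · exact absurd (h.trans k3.symm) (hne ne23)
  refine ⟨fun i => ?_, fun i => ?_, fun i => ?_, fun i => ⟨?_, ?_⟩,
    fun i => ⟨?_, ?_⟩, fun i => ⟨?_, ?_⟩⟩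
  · have h2 : R.rel i a₁ a₁ ↔ R.rel i (e p1).1 (e p1).1 := hrel i p1 p1
    rwa [k1] at h2
  · have h2 : R.rel i a₂ a₂ ↔ R.rel i (e p2).1 (e p2).1 := hrel i p2 p2
    rwa [k2] at h2
  · have h2 : R.rel i a₃ a₃ ↔ R.rel i (e p3).1 (e p3).1 := hrel i p3 p3
    rwa [k3] at h2
  · have h2 : R.rel i a₁ a₂ ↔ R.rel i (e p1).1 (e p2).1 := hrel i p1 p2
    rwa [k1, k2] at h2
  · have h2 : R.rel i a₂ a₁ ↔ R.rel i (e p2).1 (e p1).1 := hrel i p2 p1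
    rwa [k1, k2] at h2
  · have h2 : R.rel i a₁ a₃ ↔ R.rel i (e p1).1 (e p3).1 := hrel i p1 p3
    rwa [k1, k3] at h2
  · have h2 : R.rel i a₃ a₁ ↔ R.rel i (e p3).1 (e p1).1 := hrel i p3 p1
    rwa [k1, k3] at h2
  · have h2 : R.rel i a₂ a₃ ↔ R.rel i (e p2).1 (e p3).1 := hrel i p2 p3
    rwa [k2, k3] at h2
  · have h2 : R.rel i a₃ a₂ ↔ R.rel i (e p3).1 (e p2).1 := hrel i p3 p2
    rwa [k2, k3] at h2
lemma build1 {a b : R.V} (L : Lp R a b) :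
    Iso (R.restrict {a}) (R.restrict {b}) := by
  classical
  refine iso_of_fun {a} {b} (fun _ => b) (fun _ => a) ?_ ?_ ?_ ?_ ?_ ?_
  · intro z _; simp
  · intro z _; simp
  · intro z hz; exact hz.symm ▸ rfl
  · intro z hz; exact hz.symm ▸ rfl
  · intro z hz w hw
    have hz' : z = a := hz
    have hw' : w = a := hw
    subst hz'; subst hw'
    exact iff_of_true (le_refl' _) (le_refl' _)
  · intro i z hz w hw
    have hz' : z = a := hz
    have hw' : w = a := hw
    subst hz'; subst hw'
    exact L i

lemma build2 {a₁ a₂ b₁ b₂ : R.V} (ha : SLT R a₁ a₂) (hb : SLT R b₁ b₂)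
    (L1 : Lp R a₁ b₁) (L2 : Lp R a₂ b₂) (D : Dd R a₁ a₂ b₁ b₂) :
    Iso (R.restrict {a₁, a₂}) (R.restrict {b₁, b₂}) := by
  classical
  set f : R.V → R.V := fun z => if z = a₁ then b₁ else b₂ with hf
  set g : R.V → R.V := fun z => if z = b₁ then a₁ else a₂ with hg
  have f1 : f a₁ = b₁ := by show (if a₁ = a₁ then b₁ else b₂) = b₁; rw [if_pos rfl]
  have f2 : f a₂ = b₂ := by
    show (if a₂ = a₁ then b₁ else b₂) = b₂; rw [if_neg ha.2.symm]
  have g1 : g b₁ = a₁ := by show (if b₁ = b₁ then a₁ else a₂) = a₁; rw [if_pos rfl]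
  have g2 : g b₂ = a₂ := by
    show (if b₂ = b₁ then a₁ else a₂) = a₂; rw [if_neg hb.2.symm]
  have hmA : ∀ z, z ∈ ({a₁, a₂} : Set R.V) → z = a₁ ∨ z = a₂ := by
    intro z hz; simpa using hz
  have hmB : ∀ z, z ∈ ({b₁, b₂} : Set R.V) → z = b₁ ∨ z = b₂ := by
    intro z hz; simpa using hz
  refine iso_of_fun {a₁, a₂} {b₁, b₂} f g ?_ ?_ ?_ ?_ ?_ ?_
  · intro z hz; rcases hmA z hz with h | h <;> subst h <;> simp [f1, f2]
  · intro z hz; rcases hmB z hz with h | h <;> subst h <;> simp [g1, g2]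
  · intro z hz
    rcases hmA z hz with h | h <;> subst h
    · rw [f1, g1]
    · rw [f2, g2]
  · intro z hz
    rcases hmB z hz with h | h <;> subst h
    · rw [g1, f1]
    · rw [g2, f2]
  · intro z hz w hw
    rcases hmA z hz with h | h <;> subst h <;> rcases hmA w hw with h' | h' <;> subst h'
    · rw [f1]; exact iff_of_true (le_refl' _) (le_refl' _)
    · rw [f1, f2]; exact iff_of_true ha.1 hb.1
    · rw [f1, f2]; exact iff_of_false (nle ha.1 ha.2) (nle hb.1 hb.2)
    · rw [f2]; exact iff_of_true (le_refl' _) (le_refl' _)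
  · intro i z hz w hw
    rcases hmA z hz with h | h <;> subst h <;> rcases hmA w hw with h' | h' <;> subst h'
    · rw [f1]; exact L1 i
    · rw [f1, f2]; exact (D i).1
    · rw [f1, f2]; exact (D i).2
    · rw [f2]; exact L2 i

lemma build3 {a₁ a₂ a₃ b₁ b₂ b₃ : R.V}
    (ha12 : SLT R a₁ a₂) (ha23 : SLT R a₂ a₃)
    (hb12 : SLT R b₁ b₂) (hb23 : SLT R b₂ b₃)
    (L1 : Lp R a₁ b₁) (L2 : Lp R a₂ b₂) (L3 : Lp R a₃ b₃)
    (D12 : Dd R a₁ a₂ b₁ b₂) (D13 : Dd R a₁ a₃ b₁ b₃) (D23 : Dd R a₂ a₃ b₂ b₃) :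
    Iso (R.restrict {a₁, a₂, a₃}) (R.restrict {b₁, b₂, b₃}) := by
  classical
  have ha13 := ha12.trans ha23
  have hb13 := hb12.trans hb23
  set f : R.V → R.V := fun z => if z = a₁ then b₁ else if z = a₂ then b₂ else b₃ with hf
  set g : R.V → R.V := fun z => if z = b₁ then a₁ else if z = b₂ then a₂ else a₃ with hg
  have f1 : f a₁ = b₁ := by
    show (if a₁ = a₁ then b₁ else if a₁ = a₂ then b₂ else b₃) = b₁; rw [if_pos rfl]
  have f2 : f a₂ = b₂ := by
    show (if a₂ = a₁ then b₁ else if a₂ = a₂ then b₂ else b₃) = b₂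
    rw [if_neg ha12.2.symm, if_pos rfl]
  have f3 : f a₃ = b₃ := by
    show (if a₃ = a₁ then b₁ else if a₃ = a₂ then b₂ else b₃) = b₃
    rw [if_neg ha13.2.symm, if_neg ha23.2.symm]
  have g1 : g b₁ = a₁ := by
    show (if b₁ = b₁ then a₁ else if b₁ = b₂ then a₂ else a₃) = a₁; rw [if_pos rfl]
  have g2 : g b₂ = a₂ := by
    show (if b₂ = b₁ then a₁ else if b₂ = b₂ then a₂ else a₃) = a₂
    rw [if_neg hb12.2.symm, if_pos rfl]
  have g3 : g b₃ = a₃ := by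
    show (if b₃ = b₁ then a₁ else if b₃ = b₂ then a₂ else a₃) = a₃
    rw [if_neg hb13.2.symm, if_neg hb23.2.symm]
  have hmA : ∀ z, z ∈ ({a₁, a₂, a₃} : Set R.V) → z = a₁ ∨ z = a₂ ∨ z = a₃ := by
    intro z hz; simpa using hz
  have hmB : ∀ z, z ∈ ({b₁, b₂, b₃} : Set R.V) → z = b₁ ∨ z = b₂ ∨ z = b₃ := by
    intro z hz; simpa using hz
  refine iso_of_fun {a₁, a₂, a₃} {b₁, b₂, b₃} f g ?_ ?_ ?_ ?_ ?_ ?_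
  · intro z hz; rcases hmA z hz with h | h | h <;> subst h <;>
      simp only [f1, f2, f3] <;> simp
  · intro z hz; rcases hmB z hz with h | h | h <;> subst h <;>
      simp only [g1, g2, g3] <;> simp
  · intro z hz; rcases hmA z hz with h | h | h <;> subst h <;>
      simp only [f1, f2, f3, g1, g2, g3]
  · intro z hz; rcases hmB z hz with h | h | h <;> subst h <;>
      simp only [f1, f2, f3, g1, g2, g3]
  · intro z hz w hw
    rcases hmA z hz with h | h | h <;> subst h <;>
      rcases hmA w hw with h' | h' | h' <;> subst h' <;>
      simp only [f1, f2, f3]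
    · exact iff_of_true (le_refl' _) (le_refl' _)
    · exact iff_of_true ha12.1 hb12.1
    · exact iff_of_true ha13.1 hb13.1
    · exact iff_of_false (nle ha12.1 ha12.2) (nle hb12.1 hb12.2)
    · exact iff_of_true (le_refl' _) (le_refl' _)
    · exact iff_of_true ha23.1 hb23.1
    · exact iff_of_false (nle ha13.1 ha13.2) (nle hb13.1 hb13.2)
    · exact iff_of_false (nle ha23.1 ha23.2) (nle hb23.1 hb23.2)
    · exact iff_of_true (le_refl' _) (le_refl' _)
  · intro i z hz w hw
    rcases hmA z hz with h | h | h <;> subst h <;>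
      rcases hmA w hw with h' | h' | h' <;> subst h' <;>
      simp only [f1, f2, f3]
    · exact L1 i
    · exact (D12 i).1
    · exact (D13 i).1
    · exact (D12 i).2
    · exact L2 i
    · exact (D23 i).1
    · exact (D13 i).2
    · exact (D23 i).2
    · exact L3 i
/-- Atomic characterization of `x ≃_{≤2} y` for `x < y`. -/
structure GoodS (R : OrdBin ι) (x y : R.V) : Prop where
  lp : ∀ a b, R.le x a → R.le a y → R.le x b → R.le b y → Lp R a b
  dd : ∀ a b c d, R.le x a → R.le a b → R.le b y → R.le x c → R.le c d → R.le d y →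
        a ≠ b → c ≠ d → ¬(a = x ∧ b = y) → ¬(c = x ∧ d = y) → Dd R a b c d
  left : ∀ w a b, R.le w x → w ≠ x → R.le x a → R.le a y → R.le x b → R.le b y →
        Dd R w a w b
  right : ∀ w a b, R.le y w → w ≠ y → R.le x a → R.le a y → R.le x b → R.le b y →
        Dd R a w b w

lemma good_of {x y : R.V} (hxy : SLT R x y) (h : EqLe R 2 x y) : GoodS R x y := by
  classical
  have getIso : ∀ (m : ℕ), m ≤ 2 → ∀ (F : Set R.V), F.Finite → F.ncard = m →
      x ∉ F → y ∉ F → Iso (R.restrict (insert x F)) (R.restrict (insert y F)) :=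
    fun m hm F h1 h2 h3 h4 => h m hm F h1 h2 h3 h4
  -- m = 0
  have E0 : Lp R x y := by
    have h0 := getIso 0 (by norm_num) ∅ Set.finite_empty (by simp) (by simp) (by simp)
    have e1 : insert x (∅ : Set R.V) = {x} := by simp
    have e2 : insert y (∅ : Set R.V) = {y} := by simp
    rw [e1, e2] at h0
    exact extract1 h0
  -- m = 1, u between
  have E1 : ∀ u, SLT R x u → SLT R u y → Lp R x u ∧ Lp R u y ∧ Dd R x u u y := by
    intro u h1 h2
    have h0 := getIso 1 (by norm_num) {u} (Set.finite_singleton u)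
      (Set.ncard_singleton _) (by simp [h1.2]) (by simp [h2.2.symm])
    rw [show insert y ({u} : Set R.V) = {u, y} from Set.pair_comm y u] at h0
    exact extract2 h1 h2 h0
  -- m = 1, w left
  have EL : ∀ w, SLT R w x → Dd R w x w y := by
    intro w h1
    have h0 := getIso 1 (by norm_num) {w} (Set.finite_singleton w)
      (Set.ncard_singleton _) (by simp [h1.2.symm]) (by simp [(h1.trans hxy).2.symm])
    rw [show insert x ({w} : Set R.V) = {w, x} from Set.pair_comm x w,
      show insert y ({w} : Set R.V) = {w, y} from Set.pair_comm y w] at h0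
    exact (extract2 h1 (h1.trans hxy) h0).2.2
  -- m = 1, w right
  have ER : ∀ w, SLT R y w → Dd R x w y w := by
    intro w h1
    have h0 := getIso 1 (by norm_num) {w} (Set.finite_singleton w)
      (Set.ncard_singleton _) (by simp [(hxy.trans h1).2]) (by simp [h1.2])
    exact (extract2 (hxy.trans h1) h1 h0).2.2
  -- m = 2 : w < x < u < y
  have P2L : ∀ w u, SLT R w x → SLT R x u → SLT R u y →
      Dd R w x w u ∧ Dd R w u w y ∧ Dd R x u u y := by
    intro w u h1 h2 h3
    have hwu : SLT R w u := (h1.trans h2)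
    have hne : w ≠ u := hwu.2
    have h0 := getIso 2 (by norm_num) {w, u} (Set.toFinite _)
      (Set.ncard_pair hne)
      (by simp [h1.2.symm, h2.2])
      (by simp [(h1.trans hxy).2.symm, h3.2.symm])
    have e1 : insert x ({w, u} : Set R.V) = {w, x, u} := by
      ext z; simp; tauto
    have e2 : insert y ({w, u} : Set R.V) = {w, u, y} := by
      ext z; simp; tauto
    rw [e1, e2] at h0
    have hx := extract3 h1 h2 hwu h3 h0
    exact ⟨hx.2.2.2.1, hx.2.2.2.2.1, hx.2.2.2.2.2⟩
  -- m = 2 : x < u < v < y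
  have P4 : ∀ u v, SLT R x u → SLT R u v → SLT R v y →
      Dd R x u u v ∧ Dd R x v u y ∧ Dd R u v v y := by
    intro u v h1 h2 h3
    have h0 := getIso 2 (by norm_num) {u, v} (Set.toFinite _)
      (Set.ncard_pair h2.2)
      (by simp [h1.2, (h1.trans h2).2])
      (by simp [(h2.trans h3).2.symm, h3.2.symm])
    have e2 : insert y ({u, v} : Set R.V) = {u, v, y} := by
      ext z; simp; tauto
    rw [e2] at h0
    have hx := extract3 h1 h2 h2 h3 h0
    exact ⟨hx.2.2.2.1, hx.2.2.2.2.1, hx.2.2.2.2.2⟩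
  -- m = 2 : x < u < y < w
  have P5 : ∀ u w, SLT R x u → SLT R u y → SLT R y w →
      Dd R x u u y ∧ Dd R x w u w ∧ Dd R u w y w := by
    intro u w h1 h2 h3
    have huw : SLT R u w := h2.trans h3
    have h0 := getIso 2 (by norm_num) {u, w} (Set.toFinite _)
      (Set.ncard_pair huw.2)
      (by simp [h1.2, (hxy.trans h3).2])
      (by simp [h2.2.symm, h3.2])
    have e2 : insert y ({u, w} : Set R.V) = {u, y, w} := by
      ext z; simp; tauto
    rw [e2] at h0
    have hx := extract3 h1 huw h2 h3 h0
    exact ⟨hx.2.2.2.1, hx.2.2.2.2.1, hx.2.2.2.2.2⟩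
  -- loops
  have lpaux : ∀ c, R.le x c → R.le c y → Lp R x c := by
    intro c h1 h2
    rcases eq_or_ne c x with rfl | hcx
    · exact Lp.refl c
    rcases eq_or_ne c y with rfl | hcy
    · exact E0
    · exact (E1 c ⟨h1, hcx.symm⟩ ⟨h2, hcy⟩).1
  -- base reduction for pairs
  have toBase : ∀ a b, R.le x a → R.le a b → R.le b y → a ≠ b → ¬(a = x ∧ b = y) →
      ∃ w, SLT R x w ∧ SLT R w y ∧ Dd R a b x w := by
    intro a b hxa hab hby hne hexc
    rcases eq_or_ne a x with rfl | hax
    · have hbny : b ≠ y := fun hh => hexc ⟨rfl, hh⟩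
      exact ⟨b, ⟨hab, hne⟩, ⟨hby, hbny⟩, Dd.refl _ _⟩
    rcases eq_or_ne b y with rfl | hbny
    · exact ⟨a, ⟨hxa, hax.symm⟩, ⟨hab, hne⟩,
        ((E1 a ⟨hxa, hax.symm⟩ ⟨hab, hne⟩).2.2).symm⟩
    · exact ⟨a, ⟨hxa, hax.symm⟩, (slt_of_le_ne hab hne).trans_le hby,
        ((P4 a b ⟨hxa, hax.symm⟩ ⟨hab, hne⟩ ⟨hby, hbny⟩).1).symm⟩
  -- label of (x,w) doesn't depend on w in the open interval
  have const_open : ∀ u v, SLT R x u → SLT R u y → SLT R x v → SLT R v y →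
      Dd R x u x v := by
    have key : ∀ u v, SLT R x u → SLT R u y → SLT R v y → SLT R u v →
        Dd R x u x v := by
      intro u v h1 h2 h4 huv
      exact ((E1 u h1 h2).2.2).trans ((P4 u v h1 huv h4).2.1).symm
    intro u v h1 h2 h3 h4
    rcases eq_or_ne u v with rfl | hne
    · exact Dd.refl _ _
    rcases le_total' u v with hle | hle
    · exact key u v h1 h2 h4 ⟨hle, hne⟩
    · exact (key v u h3 h4 h2 ⟨hle, hne.symm⟩).symm
  refine ⟨?_, ?_, ?_, ?_⟩
  · intro a b hxa hay hxb hby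
    exact (lpaux a hxa hay).symm.trans (lpaux b hxb hby)
  · intro a b c d hxa hab hby hxc hcd hdy hab' hcd' hexc1 hexc2
    obtain ⟨w1, hw1a, hw1b, hD1⟩ := toBase a b hxa hab hby hab' hexc1
    obtain ⟨w2, hw2a, hw2b, hD2⟩ := toBase c d hxc hcd hdy hcd' hexc2
    exact hD1.trans ((const_open w1 w2 hw1a hw1b hw2a hw2b).trans hD2.symm)
  · intro w a b hwx hwnx hxa hay hxb hby
    have hwx' : SLT R w x := ⟨hwx, hwnx⟩
    have aux : ∀ c, R.le x c → R.le c y → Dd R w x w c := by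
      intro c h1 h2
      rcases eq_or_ne c x with rfl | hcx
      · exact Dd.refl _ _
      rcases eq_or_ne c y with rfl | hcy
      · exact EL w hwx'
      · exact (P2L w c hwx' ⟨h1, hcx.symm⟩ ⟨h2, hcy⟩).1
    exact (aux a hxa hay).symm.trans (aux b hxb hby)
  · intro w a b hyw hwny hxa hay hxb hby
    have hyw' : SLT R y w := ⟨hyw, hwny.symm⟩
    have aux : ∀ c, R.le x c → R.le c y → Dd R x w c w := by
      intro c h1 h2
      rcases eq_or_ne c x with rfl | hcx
      · exact Dd.refl _ _
      rcases eq_or_ne c y with rfl | hcy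
      · exact ER w hyw'
      · exact (P5 c w ⟨h1, hcx.symm⟩ ⟨h2, hcy⟩ hyw').2.1
    exact (aux a hxa hay).symm.trans (aux b hxb hby)
lemma eqLe_of_good {x y : R.V} (hxy : SLT R x y) (G : GoodS R x y) :
    EqLe R 2 x y := by
  classical
  have rx : R.le x x := le_refl' x
  have ry : R.le y y := le_refl' y
  have Lxy : Lp R x y := G.lp x y rx hxy.1 hxy.1 ry
  have zone : ∀ u, u ≠ x → u ≠ y → SLT R u x ∨ (SLT R x u ∧ SLT R u y) ∨ SLT R y u := by
    intro u hux huy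
    rcases le_total' u x with h | h
    · exact Or.inl ⟨h, hux⟩
    · rcases le_total' u y with h' | h'
      · exact Or.inr (Or.inl ⟨⟨h, Ne.symm hux⟩, ⟨h', huy⟩⟩)
      · exact Or.inr (Or.inr ⟨h', Ne.symm huy⟩)
  intro m hm F hFfin hcard hxF hyF
  show Iso (R.restrict (insert x F)) (R.restrict (insert y F))
  match m, hm with
  | 0, _ =>
    have hF : F = ∅ := (Set.ncard_eq_zero hFfin).mp hcard
    subst hF
    have e1 : insert x (∅ : Set R.V) = {x} := by simp
    have e2 : insert y (∅ : Set R.V) = {y} := by simp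
    rw [e1, e2]
    exact build1 Lxy
  | 1, _ =>
    obtain ⟨u, rfl⟩ := Set.ncard_eq_one.mp hcard
    have hux : u ≠ x := fun hh => hxF (by simp [hh])
    have huy : u ≠ y := fun hh => hyF (by simp [hh])
    rcases zone u hux huy with hu | ⟨hu1, hu2⟩ | hu
    · -- u < x
      have e1 : insert x ({u} : Set R.V) = {u, x} := Set.pair_comm x u
      have e2 : insert y ({u} : Set R.V) = {u, y} := Set.pair_comm y u
      rw [e1, e2]
      exact build2 hu (hu.trans hxy) (Lp.refl u) Lxy
        (G.left u x y hu.1 hu.2 rx hxy.1 hxy.1 ry)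
    · -- x < u < y
      have e2 : insert y ({u} : Set R.V) = {u, y} := Set.pair_comm y u
      rw [e2]
      exact build2 hu1 hu2 (G.lp x u rx hxy.1 hu1.1 hu2.1)
        (G.lp u y hu1.1 hu2.1 hxy.1 ry)
        (G.dd x u u y rx hu1.1 hu2.1 hu1.1 hu2.1 ry hu1.2 hu2.2
          (fun hh => hu2.2 hh.2) (fun hh => hu1.2 hh.1.symm))
    · -- y < u
      exact build2 (hxy.trans hu) hu Lxy (Lp.refl u)
        (G.right u x y hu.1 (Ne.symm hu.2) rx hxy.1 hxy.1 ry)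
  | 2, _ =>
    obtain ⟨u, v, huvne, rfl⟩ := Set.ncard_eq_two.mp hcard
    have key : ∀ u v : R.V, SLT R u v → u ≠ x → u ≠ y → v ≠ x → v ≠ y →
        Iso (R.restrict (insert x {u, v})) (R.restrict (insert y {u, v})) := by
      clear hxF hyF huvne hcard hFfin u v
      intro u v huv hux huy hvx hvy
      rcases zone u hux huy with hu | ⟨hu1, hu2⟩ | hu
      · rcases zone v hvx hvy with hv | ⟨hv1, hv2⟩ | hv
        · -- u < v < x
          have e1 : insert x ({u, v} : Set R.V) = {u, v, x} := by ext z; simp; tauto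
          have e2 : insert y ({u, v} : Set R.V) = {u, v, y} := by ext z; simp; tauto
          rw [e1, e2]
          exact build3 huv hv huv (hv.trans hxy) (Lp.refl u) (Lp.refl v) Lxy
            (Dd.refl u v) (G.left u x y hu.1 hu.2 rx hxy.1 hxy.1 ry)
            (G.left v x y hv.1 hv.2 rx hxy.1 hxy.1 ry)
        · -- u < x < v < y
          have e1 : insert x ({u, v} : Set R.V) = {u, x, v} := by ext z; simp; tauto
          have e2 : insert y ({u, v} : Set R.V) = {u, v, y} := by ext z; simp; tauto
          rw [e1, e2]
          exact build3 hu hv1 huv hv2 (Lp.refl u)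
            (G.lp x v rx hxy.1 hv1.1 hv2.1) (G.lp v y hv1.1 hv2.1 hxy.1 ry)
            (G.left u x v hu.1 hu.2 rx hxy.1 hv1.1 hv2.1)
            (G.left u v y hu.1 hu.2 hv1.1 hv2.1 hxy.1 ry)
            (G.dd x v v y rx hv1.1 hv2.1 hv1.1 hv2.1 ry hv1.2 hv2.2
              (fun hh => hv2.2 hh.2) (fun hh => hv1.2 hh.1.symm))
        · -- u < x, y < v
          have e1 : insert x ({u, v} : Set R.V) = {u, x, v} := by ext z; simp; tauto
          have e2 : insert y ({u, v} : Set R.V) = {u, y, v} := by ext z; simp; tauto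
          rw [e1, e2]
          exact build3 hu (hxy.trans hv) (hu.trans hxy) hv (Lp.refl u) Lxy
            (Lp.refl v) (G.left u x y hu.1 hu.2 rx hxy.1 hxy.1 ry)
            (Dd.refl u v) (G.right v x y hv.1 (Ne.symm hv.2) rx hxy.1 hxy.1 ry)
      · rcases zone v hvx hvy with hv | ⟨hv1, hv2⟩ | hv
        · -- impossible: v < x < u and u < v
          exact absurd huv.1 (nle (hv.trans hu1).1 (hv.trans hu1).2)
        · -- x < u < v < y
          have e2 : insert y ({u, v} : Set R.V) = {u, v, y} := by ext z; simp; tauto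
          rw [e2]
          exact build3 hu1 huv huv hv2
            (G.lp x u rx hxy.1 hu1.1 hu2.1) (G.lp u v hu1.1 hu2.1 hv1.1 hv2.1)
            (G.lp v y hv1.1 hv2.1 hxy.1 ry)
            (G.dd x u u v rx hu1.1 hu2.1 hu1.1 huv.1 hv2.1 hu1.2 huv.2
              (fun hh => hu2.2 hh.2) (fun hh => hu1.2 hh.1.symm))
            (G.dd x v u y rx hv1.1 hv2.1 hu1.1 hu2.1 ry hv1.2 hu2.2
              (fun hh => hv2.2 hh.2) (fun hh => hu1.2 hh.1.symm))
            (G.dd u v v y hu1.1 huv.1 hv2.1 hv1.1 hv2.1 ry huv.2 hv2.2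
              (fun hh => hu1.2 hh.1.symm) (fun hh => hv1.2 hh.1.symm))
        · -- x < u < y < v
          have e2 : insert y ({u, v} : Set R.V) = {u, y, v} := by ext z; simp; tauto
          rw [e2]
          exact build3 hu1 (hu2.trans hv) hu2 hv
            (G.lp x u rx hxy.1 hu1.1 hu2.1) (G.lp u y hu1.1 hu2.1 hxy.1 ry)
            (Lp.refl v)
            (G.dd x u u y rx hu1.1 hu2.1 hu1.1 hu2.1 ry hu1.2 hu2.2
              (fun hh => hu2.2 hh.2) (fun hh => hu1.2 hh.1.symm))
            (G.right v x u hv.1 (Ne.symm hv.2) rx hxy.1 hu1.1 hu2.1)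
            (G.right v u y hv.1 (Ne.symm hv.2) hu1.1 hu2.1 hxy.1 ry)
      · rcases zone v hvx hvy with hv | ⟨hv1, hv2⟩ | hv
        · -- impossible
          exact absurd huv.1 (nle ((hv.trans hxy).trans hu).1 ((hv.trans hxy).trans hu).2)
        · -- impossible
          exact absurd huv.1 (nle (hv2.trans hu).1 (hv2.trans hu).2)
        · -- y < u < v
          exact build3 (hxy.trans hu) huv hu huv Lxy (Lp.refl u) (Lp.refl v)
            (G.right u x y hu.1 (Ne.symm hu.2) rx hxy.1 hxy.1 ry)
            (G.right v x y hv.1 (Ne.symm hv.2) rx hxy.1 hxy.1 ry)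
            (Dd.refl u v)
    have hux : u ≠ x := fun hh => hxF (by simp [hh])
    have huy : u ≠ y := fun hh => hyF (by simp [hh])
    have hvx : v ≠ x := fun hh => hxF (by simp [hh])
    have hvy : v ≠ y := fun hh => hyF (by simp [hh])
    rcases le_total' u v with h | h
    · exact key u v ⟨h, huvne⟩ hux huy hvx hvy
    · rw [Set.pair_comm u v]
      exact key v u ⟨h, Ne.symm huvne⟩ hvx hvy hux huy
lemma good_sandwich {x x' y y' : R.V} (hxx' : SLT R x x') (hx'y : SLT R x' y)
    (hyy' : SLT R y y') (G : GoodS R x y) (G' : GoodS R x' y') : GoodS R x y' := by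
  have hxy : SLT R x y := hxx'.trans hx'y
  have hx'y' : SLT R x' y' := hx'y.trans hyy'
  have hxy' : SLT R x y' := hxy.trans hyy'
  have rx : R.le x x := le_refl' x
  have rx' : R.le x' x' := le_refl' x'
  have ry : R.le y y := le_refl' y
  have ry' : R.le y' y' := le_refl' y'
  -- common reference: the pair (x', y)
  have C : ∀ a b, R.le x a → R.le a b → R.le b y' → a ≠ b → ¬(a = x ∧ b = y') →
      Dd R a b x' y := by
    intro a b hxa hab hby' hab' hexc
    by_cases hby : R.le b y
    · by_cases hsp : a = x ∧ b = y
      · obtain ⟨rfl, rfl⟩ := hsp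
        have D1 : Dd R a x' a b :=
          G'.left a x' b hxx'.1 hxx'.2 rx' hx'y'.1 hx'y.1 hyy'.1
        have D2 : Dd R a x' x' b :=
          G.dd a x' x' b rx hxx'.1 hx'y.1 hxx'.1 hx'y.1 ry hxx'.2 hx'y.2
            (fun hh => hx'y.2 hh.2) (fun hh => hxx'.2 hh.1.symm)
        exact D1.symm.trans D2
      · exact G.dd a b x' y hxa hab hby hxx'.1 hx'y.1 ry hab' hx'y.2 hsp
          (fun hh => hxx'.2 hh.1.symm)
    · have hyb : R.le y b := (le_total' b y).resolve_left hby
      have hbny : b ≠ y := fun hh => hby (hh ▸ le_refl' y)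
      by_cases hax' : R.le a x'
      · rcases eq_or_ne a x' with rfl | hanex'
        · by_cases hbey' : b = y'
          · subst hbey'
            have D1 : Dd R a b y b :=
              G.right b a y hyy'.1 (Ne.symm hyy'.2) hxx'.1 hx'y.1 hxy.1 ry
            have D2 : Dd R y b a y :=
              G'.dd y b a y hx'y.1 hyy'.1 ry' rx' hx'y.1 hyy'.1
                hyy'.2 hx'y.2 (fun hh => hx'y.2 hh.1.symm) (fun hh => hyy'.2 hh.2)
            exact D1.trans D2
          · exact G'.dd a b a y rx' (le_trans' hx'y.1 hyb) hby' rx' hx'y.1 hyy'.1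
              hab' hx'y.2 (fun hh => hbey' hh.2) (fun hh => hyy'.2 hh.2)
        · have D1 : Dd R a b a x' :=
            G'.left a b x' hax' hanex' (le_trans' hx'y.1 hyb) hby' rx' hx'y'.1
          have D2 : Dd R a x' x' y :=
            G.dd a x' x' y hxa hax' hx'y.1 hxx'.1 hx'y.1 ry hanex' hx'y.2
              (fun hh => hx'y.2 hh.2) (fun hh => hxx'.2 hh.1.symm)
          exact D1.trans D2
      · have hx'a : R.le x' a := (le_total' a x').resolve_left hax'
        have hanex' : a ≠ x' := fun hh => hax' (hh ▸ le_refl' x')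
        exact G'.dd a b x' y hx'a hab hby' rx' hx'y.1 hyy'.1 hab' hx'y.2
          (fun hh => hanex' hh.1) (fun hh => hyy'.2 hh.2)
  refine ⟨?_, ?_, ?_, ?_⟩
  · -- loops
    have aux : ∀ a, R.le x a → R.le a y' → Lp R x a := by
      intro a h1 h2
      rcases le_total' a y with h | h
      · exact G.lp x a rx hxy.1 h1 h
      · exact (G.lp x x' rx hxy.1 hxx'.1 hx'y.1).trans
          (G'.lp x' a rx' hx'y'.1 (le_trans' hx'y.1 h) h2)
    intro a b h1 h2 h3 h4
    exact (aux a h1 h2).symm.trans (aux b h3 h4)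
  · -- pair labels
    intro a b c d hxa hab hby hxc hcd hdy hab' hcd' he1 he2
    exact (C a b hxa hab hby hab' he1).trans (C c d hxc hcd hdy hcd' he2).symm
  · -- left externals
    intro w a b hwx hwnx hxa hay hxb hby
    have hwx' : SLT R w x := ⟨hwx, hwnx⟩
    have aux : ∀ a, R.le x a → R.le a y' → Dd R w x w a := by
      intro a h1 h2
      rcases le_total' a y with h | h
      · exact G.left w x a hwx hwnx rx hxy.1 h1 h
      · exact (G.left w x x' hwx hwnx rx hxy.1 hxx'.1 hx'y.1).trans
          (G'.left w x' a (hwx'.trans hxx').1 (hwx'.trans hxx').2 rx' hx'y'.1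
            (le_trans' hx'y.1 h) h2)
    intro i
    exact (((aux a hxa hay).symm.trans (aux b hxb hby)) i)
  · -- right externals
    intro w a b hy'w hwny' hxa hay hxb hby
    have hyw : SLT R y w := hyy'.trans ⟨hy'w, Ne.symm hwny'⟩
    have aux : ∀ a, R.le x a → R.le a y' → Dd R x w a w := by
      intro a h1 h2
      rcases le_total' a y with h | h
      · exact G.right w x a hyw.1 (Ne.symm hyw.2) rx hxy.1 h1 h
      · exact (G.right w x x' hyw.1 (Ne.symm hyw.2) rx hxy.1 hxx'.1 hx'y.1).trans
          (G'.right w x' a hy'w hwny' rx' hx'y'.1 (le_trans' hx'y.1 h) h2)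
    exact (aux a hxa hay).symm.trans (aux b hxb hby)

end SandwichAux

/-- If `x < x' < y < y'` in an ordered binary structure `R`, `x ≃_{≤2,R} y`
and `x' ≃_{≤2,R} y'`, then `x ≃_{≤2,R} y'`. -/
theorem sandwich {ι : Type} (R : OrdBin ι) (x x' y y' : R.V)
    (h1 : R.le x x') (h1' : x ≠ x') (h2 : R.le x' y) (h2' : x' ≠ y)
    (h3 : R.le y y') (h3' : y ≠ y')
    (hxy : OrdBin.EqLe R 2 x y) (hx'y' : OrdBin.EqLe R 2 x' y') :
    OrdBin.EqLe R 2 x y' := by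
  have hxx' : SandwichAux.SLT R x x' := ⟨h1, h1'⟩
  have hx'y : SandwichAux.SLT R x' y := ⟨h2, h2'⟩
  have hyy' : SandwichAux.SLT R y y' := ⟨h3, h3'⟩
  have G := SandwichAux.good_of (hxx'.trans hx'y) hxy
  have G' := SandwichAux.good_of (hx'y.trans hyy') hx'y'
  exact SandwichAux.eqLe_of_good ((hxx'.trans hx'y).trans hyy')
    (SandwichAux.good_sandwich hxx' hx'y hyy' G G')
end

section
/- If a relational structure R of finite signature admits a monomorphic decomposition into ℓ blocks (ℓ ≥ 1), then its profile satisfies φ_R(n) ≤ binomial(n + ℓ − 1, ℓ − 1) for every n ∈ ℕ. -/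
/-- A relational structure of signature `ar : ι → ℕ`: a domain `V` together with,
for each `i : ι`, an `ar i`-ary relation on `V`. -/
structure RelStruct (ι : Type) (ar : ι → ℕ) where
  V : Type
  rel : ∀ i : ι, (Fin (ar i) → V) → Prop

namespace RelStruct

variable {ι : Type} {ar : ι → ℕ}

/-- The substructure induced on a subset `A` of the domain. -/
def restrict (R : RelStruct ι ar) (A : Set R.V) : RelStruct ι ar where
  V := A
  rel := fun i f => R.rel i fun j => (f j : R.V)

/-- Isomorphism of relational structures: a bijection of the domains transporting
each relation onto the corresponding one. -/
def Iso (R S : RelStruct ι ar) : Prop :=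
  ∃ e : R.V ≃ S.V, ∀ (i : ι) (f : Fin (ar i) → R.V), R.rel i f ↔ S.rel i fun j => e (f j)

/-- `R` embeds in `S` if `R` is isomorphic to an induced substructure of `S`. -/
def Embeds (R S : RelStruct ι ar) : Prop :=
  ∃ A : Set S.V, Iso R (S.restrict A)

/-- `B` is a monomorphic part of `R`: any two finite subsets of the domain of the
same cardinality which agree outside `B` induce isomorphic substructures. -/
def MonoPart (R : RelStruct ι ar) (B : Set R.V) : Prop :=
  ∀ A A' : Set R.V, A.Finite → A'.Finite → A.ncard = A'.ncard →
    A \ B = A' \ B → Iso (R.restrict A) (R.restrict A')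

/-- A monomorphic decomposition of `R`: a partition of the domain into monomorphic parts. -/
def MonoDecomp (R : RelStruct ι ar) (P : Set (Set R.V)) : Prop :=
  Setoid.IsPartition P ∧ ∀ B ∈ P, R.MonoPart B

/-- `R` has a monomorphic decomposition with finitely many blocks. -/
def HasFiniteMonoDecomp (R : RelStruct ι ar) : Prop :=
  ∃ P : Set (Set R.V), R.MonoDecomp P ∧ P.Finite

/-- The age of `R`: the class of finite structures embeddable in `R`. -/
def Age (R : RelStruct ι ar) : Set (RelStruct ι ar) :=
  {S | Finite S.V ∧ Embeds S R}

/-- A hereditary class of finite structures: all members are finite, and every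
structure embeddable in a member is again a member. -/
def Hereditary (C : Set (RelStruct ι ar)) : Prop :=
  (∀ R ∈ C, Finite R.V) ∧ ∀ R ∈ C, ∀ S : RelStruct ι ar, Embeds S R → S ∈ C

/-- `x` and `y` are `F`-equivalent: the substructures induced on `{x} ∪ F` and
`{y} ∪ F` are isomorphic. -/
def EqF (R : RelStruct ι ar) (F : Set R.V) (x y : R.V) : Prop :=
  Iso (R.restrict (insert x F)) (R.restrict (insert y F))

/-- `x ≃_{m,R} y`: `x` and `y` are `F`-equivalent for every `m`-element subset `F`
of `V \ {x, y}`. -/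
def EqM (R : RelStruct ι ar) (m : ℕ) (x y : R.V) : Prop :=
  ∀ F : Set R.V, F.Finite → F.ncard = m → x ∉ F → y ∉ F → EqF R F x y

/-- `x ≃_{≤m,R} y`: `x ≃_{m',R} y` for every `m' ≤ m`. -/
def EqLe (R : RelStruct ι ar) (m : ℕ) (x y : R.V) : Prop :=
  ∀ m' ≤ m, EqM R m' x y

/-- `x ≃_R y`: `x ≃_{m,R} y` for every `m`. -/
def EqR (R : RelStruct ι ar) (x y : R.V) : Prop :=
  ∀ m : ℕ, EqM R m x y

/-- The profile of `R`: the number of induced substructures on `n`-element subsets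
of the domain, counted up to isomorphism. -/
noncomputable def profileR (R : RelStruct ι ar) (n : ℕ) : ℕ :=
  Nat.card (Quot fun (A B : {A : Set R.V // A.Finite ∧ A.ncard = n}) =>
    Iso (R.restrict A.1) (R.restrict B.1))

lemma iso_refl (R : RelStruct ι ar) : Iso R R :=
  ⟨Equiv.refl _, fun _ _ => Iff.rfl⟩

lemma iso_trans {R S T : RelStruct ι ar} (h1 : Iso R S) (h2 : Iso S T) : Iso R T := by
  obtain ⟨e, he⟩ := h1; obtain ⟨g, hg⟩ := h2
  exact ⟨e.trans g, fun i f => (he i f).trans (hg i _)⟩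

lemma iso_of_eq {R : RelStruct ι ar} {A A' : Set R.V} (h : A = A') :
    Iso (R.restrict A) (R.restrict A') := by subst h; exact iso_refl _

/-- Key lemma: same intersection cardinalities with each block implies isomorphic. -/
lemma iso_of_blocks {R : RelStruct ι ar} {P : Set (Set R.V)}
    (hP : R.MonoDecomp P) (hfin : P.Finite)
    {A A' : Set R.V} (hA : A.Finite) (hA' : A'.Finite)
    (h : ∀ B ∈ P, (A ∩ B).ncard = (A' ∩ B).ncard) :
    Iso (R.restrict A) (R.restrict A') := by
  classical
  have key : ∀ S : Finset (Set R.V), ↑S ⊆ P →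
      Iso (R.restrict A) (R.restrict ((A' ∩ ⋃₀ ↑S) ∪ (A \ ⋃₀ ↑S))) := by
    intro S
    induction S using Finset.induction with
    | empty =>
      intro _
      apply iso_of_eq
      simp
    | @insert B S hBS ih =>
      intro hsub
      have hBP : B ∈ P := hsub (Finset.mem_insert_self _ _)
      have hSP : ↑S ⊆ P := fun x hx => hsub (by simpa using Or.inr hx)
      have hdisj : ∀ x ∈ B, x ∉ ⋃₀ (↑S : Set (Set R.V)) := by
        intro x hxB hxS
        obtain ⟨B', hB'S, hxB'⟩ := hxS
        obtain ⟨b, -, hb⟩ := hP.1.2 x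
        have h1 : B = b := hb B ⟨hBP, hxB⟩
        have h2 : B' = b := hb B' ⟨hSP hB'S, hxB'⟩
        rw [h2, ← h1] at hB'S
        exact hBS (by exact_mod_cast hB'S)
      set M : Set R.V := (A' ∩ ⋃₀ ↑S) ∪ (A \ ⋃₀ ↑S) with hM
      set M' : Set R.V := (A' ∩ ⋃₀ ↑(insert B S)) ∪ (A \ ⋃₀ ↑(insert B S)) with hM'
      have hU : ⋃₀ (↑(insert B S) : Set (Set R.V)) = B ∪ ⋃₀ ↑S := by
        rw [Finset.coe_insert, Set.sUnion_insert]
      have hMfin : M.Finite := ((hA'.inter_of_left _).union hA.diff)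
      have hM'fin : M'.Finite := ((hA'.inter_of_left _).union hA.diff)
      have hdiff : M \ B = M' \ B := by
        rw [hM, hM', hU]
        ext x
        by_cases hxS : x ∈ ⋃₀ (↑S : Set (Set R.V)) <;>
          simp +contextual [hxS, and_comm, or_comm, Set.mem_diff]
        all_goals tauto
      have hMB : M ∩ B = A ∩ B := by
        rw [hM]; ext x
        constructor
        · rintro ⟨hx, hxB⟩
          rcases hx with ⟨-, hxS⟩ | ⟨hxA, -⟩
          · exact absurd hxS (hdisj x hxB)
          · exact ⟨hxA, hxB⟩
        · rintro ⟨hxA, hxB⟩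
          exact ⟨Or.inr ⟨hxA, hdisj x hxB⟩, hxB⟩
      have hM'B : M' ∩ B = A' ∩ B := by
        rw [hM', hU]; ext x
        constructor
        · rintro ⟨hx, hxB⟩
          rcases hx with ⟨hxA', -⟩ | ⟨-, hxn⟩
          · exact ⟨hxA', hxB⟩
          · exact absurd (Or.inl hxB) hxn
        · rintro ⟨hxA', hxB⟩
          exact ⟨Or.inl ⟨hxA', Or.inl hxB⟩, hxB⟩
      have hncard : M.ncard = M'.ncard := by
        rw [← Set.ncard_inter_add_ncard_diff_eq_ncard M B hMfin,
          ← Set.ncard_inter_add_ncard_diff_eq_ncard M' B hM'fin,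
          hMB, hM'B, hdiff, h B hBP]
      exact iso_trans (ih hSP)
        (hP.2 B hBP M M' hMfin hM'fin hncard hdiff)
  have hPU : ⋃₀ P = Set.univ := by
    ext x
    simp only [Set.mem_univ, iff_true, Set.mem_sUnion]
    obtain ⟨b, ⟨hbP, hxb⟩, -⟩ := hP.1.2 x
    exact ⟨b, hbP, hxb⟩
  have := key hfin.toFinset (by simp)
  rw [hfin.coe_toFinset, hPU] at this
  simpa using this


lemma multiset_card_finsum {β γ : Type*} (s : Finset β) (g : β → Multiset γ) :
    Multiset.card (∑ b ∈ s, g b) = ∑ b ∈ s, Multiset.card (g b) := by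
  classical
  induction s using Finset.cons_induction with
  | empty => simp
  | cons a s ha ih => simp [Finset.sum_cons, ih]

lemma sum_ncard_inter {V : Type*} {P : Set (Set V)} (hpart : Setoid.IsPartition P)
    (hfin : P.Finite) {A : Set V} (hA : A.Finite) :
    ∑ B ∈ hfin.toFinset, (A ∩ B).ncard = A.ncard := by
  classical
  have hAB : ∀ B : Set V, (A ∩ B).Finite := fun B => hA.inter_of_left B
  have hcover : hA.toFinset = hfin.toFinset.biUnion (fun B => (hAB B).toFinset) := by
    ext x
    simp only [Set.Finite.mem_toFinset, Finset.mem_biUnion, Set.mem_inter_iff]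
    constructor
    · intro hx
      obtain ⟨b, ⟨hbP, hxb⟩, -⟩ := hpart.2 x
      exact ⟨b, by simp [Set.Finite.mem_toFinset, hbP], hx, hxb⟩
    · rintro ⟨b, -, hx, -⟩
      exact hx
  have hdisj : ∀ B ∈ hfin.toFinset, ∀ B' ∈ hfin.toFinset, B ≠ B' →
      Disjoint ((hAB B).toFinset) ((hAB B').toFinset) := by
    intro B hB B' hB' hne
    rw [Finset.disjoint_left]
    intro x hx hx'
    simp only [Set.Finite.mem_toFinset, Set.mem_inter_iff] at hx hx'
    obtain ⟨b, -, hb⟩ := hpart.2 x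
    exact hne ((hb B ⟨hfin.mem_toFinset.mp hB, hx.2⟩).trans
      (hb B' ⟨hfin.mem_toFinset.mp hB', hx'.2⟩).symm)
  calc ∑ B ∈ hfin.toFinset, (A ∩ B).ncard
      = ∑ B ∈ hfin.toFinset, ((hAB B).toFinset).card := by
        refine Finset.sum_congr rfl fun B _ => ?_
        rw [Set.ncard_eq_toFinset_card _ (hAB B)]
    _ = (hfin.toFinset.biUnion (fun B => (hAB B).toFinset)).card :=
        (Finset.card_biUnion hdisj).symm
    _ = A.ncard := by rw [← hcover, Set.ncard_eq_toFinset_card _ hA]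


end RelStruct

/-- If a relational structure `R` of finite signature admits a monomorphic
decomposition into `ℓ ≥ 1` blocks, then its profile satisfies
`φ_R(n) ≤ (n + ℓ - 1).choose (ℓ - 1)` for every `n`. -/
theorem profile_bound_of_monomorphic_decomposition {ι : Type} [Finite ι] {ar : ι → ℕ}
    (R : RelStruct ι ar) (ℓ : ℕ) (hℓ : 1 ≤ ℓ) (P : Set (Set R.V))
    (hP : R.MonoDecomp P) (hfin : P.Finite) (hcard : P.ncard = ℓ) :
    ∀ n : ℕ, RelStruct.profileR R n ≤ (n + ℓ - 1).choose (ℓ - 1) := by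
  classical
  intro n
  set Pf : Finset (Set R.V) := hfin.toFinset with hPfdef
  haveI : Fintype ↥(Pf : Finset (Set R.V)) := FinsetCoe.fintype Pf
  set T := {A : Set R.V // A.Finite ∧ A.ncard = n} with hT
  let f : T → Sym ↥Pf n := fun A =>
    ⟨∑ B ∈ Pf.attach, Multiset.replicate ((A.1 ∩ ↑B).ncard) B, by
      rw [RelStruct.multiset_card_finsum]
      simp only [Multiset.card_replicate]
      rw [Finset.sum_attach Pf (fun B => (A.1 ∩ B).ncard),
        RelStruct.sum_ncard_inter hP.1 hfin A.2.1, A.2.2]⟩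
  have hcount : ∀ (A : T) (B : ↥Pf),
      Multiset.count B (f A).1 = (A.1 ∩ ↑B).ncard := by
    intro A B
    rw [Multiset.count_sum']
    rw [Finset.sum_eq_single B]
    · simp [Multiset.count_replicate]
    · intro b _ hb
      simp [Multiset.count_replicate, hb]
    · intro h
      exact absurd (Finset.mem_attach _ _) h
  have hiso : ∀ A A' : T, f A = f A' →
      RelStruct.Iso (R.restrict A.1) (R.restrict A'.1) := by
    intro A A' hfe
    refine RelStruct.iso_of_blocks hP hfin A.2.1 A'.2.1 ?_
    intro B hB
    have := hcount A ⟨B, hfin.mem_toFinset.mpr hB⟩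
    rw [hfe, hcount A' ⟨B, hfin.mem_toFinset.mpr hB⟩] at this
    exact this.symm
  -- surjection from range f onto the quotient
  set Q := Quot fun (A B : T) => RelStruct.Iso (R.restrict A.1) (R.restrict B.1) with hQ
  have hsurj : ∃ g : Set.range f → Q, Function.Surjective g := by
    refine ⟨fun y => Quot.mk _ (Classical.choose y.2), ?_⟩
    intro q
    induction q using Quot.ind with
    | _ A =>
      refine ⟨⟨f A, A, rfl⟩, ?_⟩
      exact Quot.sound (hiso _ _ (Classical.choose_spec (⟨A, rfl⟩ : f A ∈ Set.range f)))
  obtain ⟨g, hg⟩ := hsurj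
  have h1 : RelStruct.profileR R n ≤ Nat.card (Set.range f) :=
    Nat.card_le_card_of_surjective g hg
  have h2 : Nat.card (Set.range f) ≤ Nat.card (Sym ↥Pf n) :=
    Nat.card_le_card_of_injective Subtype.val Subtype.val_injective
  have hPfcard : Fintype.card ↥Pf = ℓ := by
    rw [Fintype.card_coe, ← hcard, hPfdef, Set.ncard_eq_toFinset_card _ hfin]
  have h3 : Nat.card (Sym ↥Pf n) = (n + ℓ - 1).choose (ℓ - 1) := by
    rw [Nat.card_eq_fintype_card, Sym.card_sym_eq_choose, hPfcard]
    have h4 : ℓ + n - 1 = n + ℓ - 1 := by omega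
    rw [h4, ← Nat.choose_symm (by omega : n ≤ n + ℓ - 1)]
    congr 1
    omega
  calc RelStruct.profileR R n ≤ Nat.card (Set.range f) := h1
    _ ≤ Nat.card (Sym ↥Pf n) := h2
    _ = (n + ℓ - 1).choose (ℓ - 1) := h3
end
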